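/- arXiv:1103.3950 — 2 statements merged into one kernel-verified Lean document; each statement's English description precedes it below -/
import Mathlib

section
/- Let k ≥ 2 and d ≥ 2 be integers and consider n single-minded bidders over m items, where bidder i desires a set S_i of exactly k items with value 1, every item is desired by exactly d bidders, and |S_i ∩ S_{i′}| ≤ 1 for all i ≠ i′. If every bidder i independently draws x ∈ [0,1/k] from the distribution with cumulative distribution function G(x) = (kx)^{1/((d−1)(k−1))} and bids x on every item of S_i and 0 on all other items, then this profile of mixed strategies is a mixed Nash equilibrium under any tie-breaking rule, and each bidder's expected utility is 0. -/
open MeasureTheory Finset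

/-- A valuation: monotone non-decreasing with value `0` on the empty set. -/
def MonotoneVal {M : Type*} (v : Finset M → ℝ) : Prop :=
  v ∅ = 0 ∧ ∀ S T : Finset M, S ⊆ T → v S ≤ v T

/-- `S` assigns every item to exactly one bidder (it is a partition of the items). -/
def IsAllocation {N M : Type*} (S : N → Finset M) : Prop :=
  ∀ j : M, ∃! i : N, j ∈ S i

/-- A tie-breaking rule: it maps every bid profile to a partition of the items
in which every item goes to a bidder whose bid on it is highest. -/
structure TieRule (N M : Type*) where
  alloc : (N → M → ℝ) → N → Finset M
  partition : ∀ b, IsAllocation (alloc b)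
  highest : ∀ b i j, j ∈ alloc b i → ∀ i', b i' j ≤ b i j

/-- Bidder `i`'s (quasi-linear) utility in the simultaneous first-price auction. -/
def utility {N M : Type*} (v : N → Finset M → ℝ) (T : TieRule N M)
    (b : N → M → ℝ) (i : N) : ℝ :=
  v i (T.alloc b i) - ∑ j ∈ T.alloc b i, b i j

/-- Pure Nash equilibrium: no bidder can strictly gain by a unilateral
(nonnegative) deviation. -/
def PureNash {N M : Type*} [DecidableEq N] (v : N → Finset M → ℝ) (T : TieRule N M)
    (b : N → M → ℝ) : Prop :=
  ∀ (i : N) (b' : M → ℝ), (∀ j, 0 ≤ b' j) →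
    utility v T (Function.update b i b') i ≤ utility v T b i

/-- `ε`-equilibrium: no bidder can gain more than `ε` by a unilateral deviation. -/
def EpsNash {N M : Type*} [DecidableEq N] (v : N → Finset M → ℝ) (T : TieRule N M)
    (b : N → M → ℝ) (ε : ℝ) : Prop :=
  ∀ (i : N) (b' : M → ℝ), (∀ j, 0 ≤ b' j) →
    utility v T (Function.update b i b') i ≤ utility v T b i + ε

/-- Walrasian equilibrium: a partition and nonnegative item prices such that
every bidder receives a demanded set. -/
def Walrasian {N M : Type*} (v : N → Finset M → ℝ) (S : N → Finset M) (p : M → ℝ) : Prop :=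
  IsAllocation S ∧ (∀ j, 0 ≤ p j) ∧
    ∀ (i : N) (T : Finset M), v i T - ∑ j ∈ T, p j ≤ v i (S i) - ∑ j ∈ S i, p j

/-- Social welfare of an allocation. -/
def welfare {N M : Type*} [Fintype N] (v : N → Finset M → ℝ) (S : N → Finset M) : ℝ :=
  ∑ i, v i (S i)

/-- Expected utility of bidder `i` when bidders bid independently according to
the mixed strategies `σ`. -/
noncomputable def expectedUtility {N M : Type*} [Fintype N]
    (v : N → Finset M → ℝ) (T : TieRule N M) (σ : N → Measure (M → ℝ)) (i : N) : ℝ :=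
  ∫ b, utility v T b i ∂(Measure.pi σ)

/-- Mixed Nash equilibrium: no bidder can gain by deviating to any fixed
(nonnegative) bid vector. -/
def MixedNash {N M : Type*} [Fintype N] [DecidableEq N]
    (v : N → Finset M → ℝ) (T : TieRule N M) (σ : N → Measure (M → ℝ)) : Prop :=
  ∀ (i : N) (b' : M → ℝ), (∀ j, 0 ≤ b' j) →
    expectedUtility v T (Function.update σ i (Measure.dirac b')) i ≤
      expectedUtility v T σ i

/-- Expected social welfare of a profile of mixed strategies. -/
noncomputable def expectedWelfare {N M : Type*} [Fintype N]
    (v : N → Finset M → ℝ) (T : TieRule N M) (σ : N → Measure (M → ℝ)) : ℝ :=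
  ∫ b, welfare v (T.alloc b) ∂(Measure.pi σ)

/-- Every mixed strategy is supported on nonnegative bid vectors. -/
def NonnegMixed {N M : Type*} (σ : N → Measure (M → ℝ)) : Prop :=
  ∀ i, σ i {b | ∀ j, 0 ≤ b j} = 1

/-- The AND valuation: value `1` on the full set of items, `0` on proper subsets. -/
def andVal (M : Type*) [Fintype M] [DecidableEq M] : Finset M → ℝ :=
  fun S => if S = Finset.univ then 1 else 0

/-- The OR valuation: value `v` on every nonempty set of items, `0` on `∅`. -/
def orVal (M : Type*) (v : ℝ) : Finset M → ℝ :=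
  fun S => if S.Nonempty then v else 0

/-- A single-minded valuation: value `w` on every superset of `S`, `0` otherwise. -/
def singleMinded {M : Type*} [DecidableEq M] (S : Finset M) (w : ℝ) : Finset M → ℝ :=
  fun T => if S ⊆ T then w else 0

/-- `β`-XOS (β-fractionally subadditive) valuation. -/
def BetaXOS {M : Type*} (β : ℝ) (v : Finset M → ℝ) : Prop :=
  ∃ (k : ℕ) (lam : Fin (k + 1) → M → ℝ),
    (∀ l j, 0 ≤ lam l j) ∧
    ∀ S : Finset M,
      (Finset.univ.sup' Finset.univ_nonempty fun l => ∑ j ∈ S, lam l j) ≤ v S ∧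
      v S / β ≤ Finset.univ.sup' Finset.univ_nonempty fun l => ∑ j ∈ S, lam l j


namespace SMNAux

noncomputable section

/-- The bid vector of single-minded bidder `i` bidding `x` on its set. -/
def bvec {n m : ℕ} (S : Fin n → Finset (Fin m)) (i : Fin n) (x : ℝ) : Fin m → ℝ :=
  fun j => if j ∈ S i then x else 0

lemma measurable_bvec {n m : ℕ} (S : Fin n → Finset (Fin m)) (i : Fin n) :
    Measurable (bvec S i) := by
  apply measurable_pi_lambda
  intro j
  by_cases h : j ∈ S i <;> simp only [bvec, h, if_true, if_false]
  · exact measurable_id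
  · exact measurable_const

/-- The CDF, as a real function. -/
def Greal (k d : ℕ) (y : ℝ) : ℝ :=
  if y < 0 then 0
  else if y ≤ 1 / (k : ℝ) then ((k : ℝ) * y) ^ ((1:ℝ) / (((d:ℝ) - 1) * ((k:ℝ) - 1)))
  else 1

variable {k d : ℕ}

lemma kRpos (hk : 2 ≤ k) : (0:ℝ) < (k:ℝ) := by
  have : (0:ℕ) < k := by omega
  exact_mod_cast this

lemma km1pos (hk : 2 ≤ k) : (0:ℝ) < (k:ℝ) - 1 := by
  have : (1:ℝ) < (k:ℝ) := by exact_mod_cast (by omega : 1 < k)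
  linarith

lemma epos (hk : 2 ≤ k) (hd : 2 ≤ d) :
    0 < (1:ℝ) / (((d:ℝ) - 1) * ((k:ℝ) - 1)) := by
  have h1 := km1pos hk
  have h2 := km1pos hd
  positivity

lemma Greal_nonneg (hk : 2 ≤ k) (hd : 2 ≤ d) (y : ℝ) : 0 ≤ Greal k d y := by
  unfold Greal
  split_ifs with h1 h2
  · exact le_refl 0
  · have hy : 0 ≤ y := not_lt.mp h1
    positivity
  · norm_num

lemma Greal_le_one (hk : 2 ≤ k) (hd : 2 ≤ d) (y : ℝ) : Greal k d y ≤ 1 := by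
  unfold Greal
  split_ifs with h1 h2
  · norm_num
  · apply Real.rpow_le_one
    · nlinarith [kRpos hk, not_lt.mp h1]
    · rw [le_div_iff₀ (kRpos hk)] at h2
      linarith
    · exact le_of_lt (epos hk hd)
  · norm_num


lemma Greal_invk (hk : 2 ≤ k) : Greal k d (1/(k:ℝ)) = 1 := by
  unfold Greal
  rw [if_neg (not_lt.mpr (one_div_nonneg.mpr (Nat.cast_nonneg k))), if_pos le_rfl, mul_one_div, div_self (ne_of_gt (kRpos hk)),
    Real.one_rpow]

lemma Greal_zero (hk : 2 ≤ k) (hd : 2 ≤ d) : Greal k d 0 = 0 := by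
  unfold Greal
  rw [if_neg (by norm_num), if_pos (one_div_nonneg.mpr (Nat.cast_nonneg k)), mul_zero,
    Real.zero_rpow (ne_of_gt (epos hk hd))]

section Mu

variable {μ : Measure ℝ} [IsProbabilityMeasure μ]
variable (hIic : ∀ x : ℝ, μ (Set.Iic x) = ENNReal.ofReal (Greal k d x))
variable (hk : 2 ≤ k) (hd : 2 ≤ d)

include hIic hk hd

lemma mu_Iic_zero : μ (Set.Iic (0:ℝ)) = 0 := by
  rw [hIic, Greal_zero hk hd]; simp

lemma mu_Iic_invk : μ (Set.Iic (1/(k:ℝ))) = 1 := by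
  rw [hIic, Greal_invk hk]; simp

lemma mu_noAtoms : NoAtoms μ := by
  constructor
  intro a
  rcases le_or_gt a 0 with ha | ha
  · have : ({a} : Set ℝ) ⊆ Set.Iic 0 := by
      intro x hx; simp at hx; simp [hx, ha]
    exact le_antisymm (le_trans (measure_mono this) (le_of_eq (mu_Iic_zero hIic hk hd)))
      zero_le
  rcases le_or_gt a (1/(k:ℝ)) with hb | hb
  swap
  · have hsub : ({a} : Set ℝ) ⊆ (Set.Iic (1/(k:ℝ)))ᶜ := by
      intro x hx
      simp only [Set.mem_singleton_iff] at hx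
      subst hx
      simp only [Set.mem_compl_iff, Set.mem_Iic, not_le]
      exact hb
    have : μ ((Set.Iic (1/(k:ℝ)))ᶜ) = 0 := by
      rw [measure_compl measurableSet_Iic (measure_ne_top μ _), mu_Iic_invk hIic hk hd]
      simp
    exact le_antisymm (le_trans (measure_mono hsub) (le_of_eq this)) zero_le
  -- main case 0 < a ≤ 1/k : continuity of the CDF
  have key : ∀ ε : ℝ, 0 < ε → μ {a} ≤ ENNReal.ofReal ε := by
    intro ε hε
    set f : ℝ → ℝ := fun y => ((k:ℝ) * y) ^ ((1:ℝ) / (((d:ℝ) - 1) * ((k:ℝ) - 1))) with hf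
    have hcont : ContinuousAt f a := by
      have hcomp : f = (fun z : ℝ => z ^ ((1:ℝ) / (((d:ℝ) - 1) * ((k:ℝ) - 1)))) ∘
          (fun y : ℝ => (k:ℝ) * y) := rfl
      rw [hcomp]
      exact ContinuousAt.comp
        (Real.continuousAt_rpow_const _ _ (Or.inr (le_of_lt (epos hk hd))))
        ((continuous_const.mul continuous_id).continuousAt)
    rw [Metric.continuousAt_iff] at hcont
    obtain ⟨δ, hδ, hδ2⟩ := hcont ε hε
    set y₀ : ℝ := a - min (δ/2) (a/2) with hy₀
    have hmin : 0 < min (δ/2) (a/2) := by positivity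
    have hy₀pos : 0 < y₀ := by
      have : min (δ/2) (a/2) ≤ a/2 := min_le_right _ _
      simp only [hy₀]; linarith
    have hy₀lt : y₀ < a := by simp only [hy₀]; linarith
    have hdist : dist y₀ a < δ := by
      rw [Real.dist_eq, abs_of_nonpos (by simp only [hy₀]; linarith)]
      have : min (δ/2) (a/2) ≤ δ/2 := min_le_left _ _
      simp only [hy₀]; linarith
    have hfy := hδ2 hdist
    rw [Real.dist_eq] at hfy
    have hGa : Greal k d a = f a := by
      unfold Greal; rw [if_neg (not_lt.mpr (le_of_lt ha)), if_pos hb]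
    have hGy : Greal k d y₀ = f y₀ := by
      unfold Greal; rw [if_neg (not_lt.mpr (le_of_lt hy₀pos)), if_pos (by linarith)]
    have hsub : ({a} : Set ℝ) ⊆ Set.Iic a \ Set.Iic y₀ := by
      intro x hx
      simp only [Set.mem_singleton_iff] at hx
      subst hx
      exact ⟨Set.mem_Iic.mpr le_rfl, by simp only [Set.mem_Iic, not_le]; exact hy₀lt⟩
    calc μ {a} ≤ μ (Set.Iic a \ Set.Iic y₀) := measure_mono hsub
      _ = μ (Set.Iic a) - μ (Set.Iic y₀) := by
          rw [measure_diff (Set.Iic_subset_Iic.mpr (le_of_lt hy₀lt)) measurableSet_Iic.nullMeasurableSet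
            (measure_ne_top μ _)]
      _ = ENNReal.ofReal (Greal k d a) - ENNReal.ofReal (Greal k d y₀) := by
          rw [hIic, hIic]
      _ = ENNReal.ofReal (Greal k d a - Greal k d y₀) := by
          rw [ENNReal.ofReal_sub _ (Greal_nonneg hk hd _)]
      _ ≤ ENNReal.ofReal ε := by
          apply ENNReal.ofReal_le_ofReal
          rw [hGa, hGy]
          have := abs_lt.mp hfy
          linarith [this.1]
  refine le_antisymm ?_ zero_le
  refine ENNReal.le_of_forall_pos_le_add fun ε hε _ => ?_
  rw [zero_add]
  have := key (ε : ℝ) (by exact_mod_cast hε)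
  rwa [ENNReal.ofReal_coe_nnreal] at this

lemma mu_Iio (x : ℝ) : μ (Set.Iio x) = ENNReal.ofReal (Greal k d x) := by
  haveI : NullSingletonClass μ := mu_noAtoms hIic hk hd
  rw [measure_congr (Iio_ae_eq_Iic (a := x))]
  exact hIic x

lemma mu_Ioc01 : μ (Set.Ioc (0:ℝ) (1/(k:ℝ))) = 1 := by
  have : Set.Ioc (0:ℝ) (1/(k:ℝ)) = Set.Iic (1/(k:ℝ)) \ Set.Iic 0 := by
    rw [Set.Iic_sdiff_Iic]
  rw [this, measure_diff (Set.Iic_subset_Iic.mpr (by positivity))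
    measurableSet_Iic.nullMeasurableSet (measure_ne_top μ _),
    mu_Iic_invk hIic hk hd, mu_Iic_zero hIic hk hd]
  simp

lemma mu_good (V : Set ℝ) (hV : V.Countable) :
    μ (Set.Ioc (0:ℝ) (1/(k:ℝ)) \ V) = 1 := by
  haveI : NullSingletonClass μ := mu_noAtoms hIic hk hd
  rw [measure_diff_null (hV.measure_zero μ)]
  exact mu_Ioc01 hIic hk hd

end Mu

section Events

variable {n m : ℕ} (S : Fin n → Finset (Fin m))

/-- The competitors of bidder `i` on item `j`. -/
def Cset (i : Fin n) (j : Fin m) : Finset (Fin n) :=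
  (univ.filter fun i' => j ∈ S i').erase i

/-- The event that all competitors of `i` on item `j` bid strictly below `t j`. -/
def Aset (i : Fin n) (t : Fin m → ℝ) (j : Fin m) : Set (Fin n → Fin m → ℝ) :=
  {b | ∀ i' ∈ Cset S i j, b i' j < t j}

/-- The self-referential event: all competitors of `i` on `j` bid strictly below `i`'s
own bid on `j`. -/
def AAset (i : Fin n) (j : Fin m) : Set (Fin n → Fin m → ℝ) :=
  {b | ∀ i' ∈ Cset S i j, b i' j < b i j}

lemma meas_coord (i' : Fin n) (j : Fin m) :
    Measurable (fun b : Fin n → Fin m → ℝ => b i' j) :=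
  (measurable_pi_apply j).comp (measurable_pi_apply i')

lemma meas_Aset (i : Fin n) (t : Fin m → ℝ) (j : Fin m) : MeasurableSet (Aset S i t j) := by
  have : Aset S i t j = ⋂ i' ∈ Cset S i j, {b : Fin n → Fin m → ℝ | b i' j < t j} := by
    ext b; simp [Aset]
  rw [this]
  exact MeasurableSet.biInter (Finset.countable_toSet _)
    (fun i' _ => measurableSet_lt (meas_coord i' j) measurable_const)

lemma meas_AAset (i : Fin n) (j : Fin m) : MeasurableSet (AAset S i j) := by
  have : AAset S i j = ⋂ i' ∈ Cset S i j, {b : Fin n → Fin m → ℝ | b i' j < b i j} := by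
    ext b; simp [AAset]
  rw [this]
  exact MeasurableSet.biInter (Finset.countable_toSet _)
    (fun i' _ => measurableSet_lt (meas_coord i' j) (meas_coord i j))

/-- A bid vector wellformed for single-minded bidder `i'` with value in `E`. -/
def GoodSet (i' : Fin n) (E : Set ℝ) : Set (Fin m → ℝ) :=
  {v | (∀ j, j ∉ S i' → v j = 0) ∧ (∀ j ∈ S i', ∀ j' ∈ S i', v j = v j') ∧
    (∀ j ∈ S i', v j ∈ E)}

lemma meas_GoodSet (i' : Fin n) (E : Set ℝ) (hE : MeasurableSet E) :
    MeasurableSet (GoodSet S i' E) := by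
  have : GoodSet S i' E =
      (⋂ (j : Fin m), ⋂ (_ : j ∉ S i'), {v : Fin m → ℝ | v j = 0}) ∩
      ((⋂ (j : Fin m), ⋂ (_ : j ∈ S i'), ⋂ (j' : Fin m), ⋂ (_ : j' ∈ S i'),
        {v : Fin m → ℝ | v j = v j'}) ∩
      (⋂ (j : Fin m), ⋂ (_ : j ∈ S i'), {v : Fin m → ℝ | v j ∈ E})) := by
    ext v
    simp only [GoodSet, Set.mem_inter_iff, Set.mem_iInter, Set.mem_setOf_eq]
    try tauto
  rw [this]
  refine MeasurableSet.inter ?_ (MeasurableSet.inter ?_ ?_)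
  · exact MeasurableSet.iInter fun j => MeasurableSet.iInter fun _ =>
      measurableSet_eq_fun (measurable_pi_apply j) measurable_const
  · exact MeasurableSet.iInter fun j => MeasurableSet.iInter fun _ =>
      MeasurableSet.iInter fun j' => MeasurableSet.iInter fun _ =>
      measurableSet_eq_fun (measurable_pi_apply j) (measurable_pi_apply j')
  · exact MeasurableSet.iInter fun j => MeasurableSet.iInter fun _ =>
      (measurable_pi_apply j) hE

lemma bvec_mem_GoodSet (i' : Fin n) (E : Set ℝ) (x : ℝ) (hx : x ∈ E) :
    bvec S i' x ∈ GoodSet S i' E := by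
  refine ⟨fun j hj => by simp [bvec, hj], fun j hj j' hj' => by simp [bvec, hj, hj'],
    fun j hj => by simpa [bvec, hj] using hx⟩

end Events

section Cyl

/-- Measure of a single-coordinate cylinder under a product of probability measures. -/
lemma pi_cyl {ι : Type*} [Fintype ι] [DecidableEq ι] {α : Type*} [MeasurableSpace α]
    (τ : ι → Measure α) [∀ a, IsProbabilityMeasure (τ a)] (i₀ : ι) (X : Set α) :
    Measure.pi τ ((fun b : ι → α => b i₀) ⁻¹' X) = τ i₀ X := by
  have h1 : ((fun b : ι → α => b i₀) ⁻¹' X) =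
      Set.pi Set.univ (fun a => if a = i₀ then X else Set.univ) := by
    ext b
    simp only [Set.mem_preimage, Set.mem_pi, Set.mem_univ, true_implies]
    constructor
    · intro h a
      by_cases ha : a = i₀
      · subst ha; simpa using h
      · simp [ha]
    · intro h
      have := h i₀
      simpa using this
  rw [h1, Measure.pi_pi]
  rw [Finset.prod_eq_single i₀ (fun a _ ha => by simp [ha]) (fun h => absurd (mem_univ i₀) h)]
  simp

end Cyl

section Rect

variable {n m : ℕ} {k d : ℕ}

lemma pi_rect (hk : 2 ≤ k) (hd : 2 ≤ d)
    (S : Fin n → Finset (Fin m))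
    (hdeg : ∀ j : Fin m, (univ.filter fun i => j ∈ S i).card = d)
    (hinter : ∀ i i', i ≠ i' → (S i ∩ S i').card ≤ 1)
    {μ : Measure ℝ} [IsProbabilityMeasure μ]
    (hIic : ∀ x : ℝ, μ (Set.Iic x) = ENNReal.ofReal (Greal k d x))
    (i : Fin n)
    (τ : Fin n → Measure (Fin m → ℝ)) [∀ i', IsProbabilityMeasure (τ i')]
    (hτ : ∀ i', i' ≠ i → τ i' = μ.map (bvec S i'))
    (t : Fin m → ℝ) (J : Finset (Fin m)) (hJ : J ⊆ S i) :
    Measure.pi τ (⋂ j ∈ J, Aset S i t j) =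
      ∏ j ∈ J, (ENNReal.ofReal (Greal k d (t j)))^(d-1) := by
  classical
  set B : Fin n → Set (Fin m → ℝ) :=
    fun i' => if i' = i then Set.univ else {v | ∀ j ∈ J ∩ S i', v j < t j} with hB
  have h1 : (⋂ j ∈ J, Aset S i t j) = Set.pi Set.univ B := by
    ext b
    simp only [Set.mem_iInter, Set.mem_pi, Set.mem_univ, true_implies, hB, Aset,
      Set.mem_setOf_eq]
    constructor
    · intro H i'
      by_cases hi' : i' = i
      · simp [hi']
      · simp only [hi', if_false, Set.mem_setOf_eq]
        intro j hj
        rw [Finset.mem_inter] at hj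
        exact H j hj.1 i' (by simp [Cset, Finset.mem_erase, hi', hj.2])
    · intro H j hj i' hi'
      simp only [Cset, Finset.mem_erase, Finset.mem_filter, Finset.mem_univ, true_and] at hi'
      have := H i'
      rw [if_neg hi'.1] at this
      exact this j (Finset.mem_inter.mpr ⟨hj, hi'.2⟩)
  have h2 : ∀ i', i' ≠ i → τ i' (B i') = ∏ j ∈ J ∩ S i', ENNReal.ofReal (Greal k d (t j)) := by
    intro i' hi'
    have hBi' : B i' = {v : Fin m → ℝ | ∀ j ∈ J ∩ S i', v j < t j} := by
      rw [hB]; simp [hi']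
    have hmeas : MeasurableSet {v : Fin m → ℝ | ∀ j ∈ J ∩ S i', v j < t j} := by
      have : {v : Fin m → ℝ | ∀ j ∈ J ∩ S i', v j < t j} =
          ⋂ j ∈ (J ∩ S i'), {v : Fin m → ℝ | v j < t j} := by
        ext v; simp
      rw [this]
      exact MeasurableSet.biInter (Finset.countable_toSet _)
        (fun j _ => measurableSet_lt (measurable_pi_apply j) measurable_const)
    rw [hBi', hτ i' hi', Measure.map_apply (measurable_bvec S i') hmeas]
    have hpre : bvec S i' ⁻¹' {v | ∀ j ∈ J ∩ S i', v j < t j} =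
        ⋂ j ∈ (J ∩ S i'), Set.Iio (t j) := by
      ext x
      simp only [Set.mem_preimage, Set.mem_setOf_eq, Set.mem_iInter, Set.mem_Iio, bvec]
      constructor
      · intro H j hj
        have := H j hj
        rwa [if_pos (Finset.mem_inter.mp hj).2] at this
      · intro H j hj
        rw [if_pos (Finset.mem_inter.mp hj).2]
        exact H j hj
    rw [hpre]
    have hc1 : (J ∩ S i').card ≤ 1 :=
      le_trans (Finset.card_le_card
        (Finset.inter_subset_inter hJ (Finset.Subset.refl _)))
        (hinter i i' (fun h => hi' h.symm))
    rcases Finset.eq_empty_or_nonempty (J ∩ S i') with he | hne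
    · rw [he]; simp
    · obtain ⟨j₀, hj₀⟩ := hne
      have hsing : J ∩ S i' = {j₀} :=
        Finset.eq_singleton_iff_unique_mem.mpr
          ⟨hj₀, fun x hx => Finset.card_le_one.mp hc1 x hx j₀ hj₀⟩
      rw [hsing, Finset.set_biInter_singleton, Finset.prod_singleton,
        mu_Iio hIic hk hd]
  rw [h1, Measure.pi_pi]
  calc ∏ i', τ i' (B i')
      = τ i (B i) * ∏ i' ∈ univ.erase i, τ i' (B i') :=
        (Finset.mul_prod_erase univ _ (mem_univ i)).symm
    _ = ∏ i' ∈ univ.erase i, ∏ j ∈ J ∩ S i', ENNReal.ofReal (Greal k d (t j)) := by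
        have hBi : B i = Set.univ := by rw [hB]; simp
        rw [hBi, measure_univ, one_mul]
        exact Finset.prod_congr rfl (fun i' hi' => h2 i' (Finset.mem_erase.mp hi').1)
    _ = ∏ i' ∈ univ.erase i, ∏ j ∈ J,
          (if j ∈ S i' then ENNReal.ofReal (Greal k d (t j)) else 1) := by
        refine Finset.prod_congr rfl (fun i' _ => ?_)
        rw [← Finset.filter_mem_eq_inter, Finset.prod_filter]
    _ = ∏ j ∈ J, ∏ i' ∈ univ.erase i,
          (if j ∈ S i' then ENNReal.ofReal (Greal k d (t j)) else 1) := Finset.prod_comm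
    _ = ∏ j ∈ J, (ENNReal.ofReal (Greal k d (t j)))^(d-1) := by
        refine Finset.prod_congr rfl (fun j hj => ?_)
        rw [← Finset.prod_filter, Finset.filter_erase, Finset.prod_const,
          Finset.card_erase_of_mem (Finset.mem_filter.mpr ⟨mem_univ i, hJ hj⟩), hdeg j]

end Rect

section Pointwise

variable {n m : ℕ} {k d : ℕ}

lemma alloc_iff (hd : 2 ≤ d)
    (S : Fin n → Finset (Fin m))
    (hdeg : ∀ j : Fin m, (univ.filter fun i => j ∈ S i).card = d)
    (T : TieRule (Fin n) (Fin m)) (i : Fin n) (b : Fin n → Fin m → ℝ)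
    (H1 : ∀ i', i' ≠ i → ∀ j, j ∉ S i' → b i' j = 0)
    (H2 : ∀ i', i' ≠ i → ∀ j, j ∈ S i' → 0 < b i' j)
    (H3 : ∀ i', i' ≠ i → ∀ j', j' ∈ S i' → ∀ j, b i' j' ≠ b i j)
    (j : Fin m) :
    j ∈ T.alloc b i ↔ b ∈ AAset S i j := by
  constructor
  · intro hj i' hi'
    simp only [Cset, Finset.mem_erase, Finset.mem_filter, Finset.mem_univ, true_and] at hi'
    exact lt_of_le_of_ne (T.highest b i j hj i') (H3 i' hi'.1 j hi'.2 j)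
  · intro hb
    have hcard : d - 1 ≤ (Cset S i j).card := by
      have h := Finset.pred_card_le_card_erase
        (s := univ.filter fun i' => j ∈ S i') (a := i)
      rw [hdeg j] at h
      exact h
    have hne : (Cset S i j).Nonempty := Finset.card_pos.mp (by omega)
    obtain ⟨i₀, hi₀⟩ := hne
    have hbi : 0 < b i j := by
      have h1 := hb i₀ hi₀
      simp only [Cset, Finset.mem_erase, Finset.mem_filter, Finset.mem_univ, true_and] at hi₀
      have h2 := H2 i₀ hi₀.1 j hi₀.2
      linarith
    obtain ⟨w, hw, -⟩ := T.partition b j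
    have hwin : w = i := by
      by_contra hwi
      have hle : b i j ≤ b w j := T.highest b w j hw i
      by_cases hjS : j ∈ S w
      · have hwC : w ∈ Cset S i j := by
          simp only [Cset, Finset.mem_erase, Finset.mem_filter, Finset.mem_univ, true_and]
          exact ⟨hwi, hjS⟩
        linarith [hb w hwC]
      · rw [H1 w hwi j hjS] at hle
        linarith
    rwa [hwin] at hw

lemma utility_formula (hd : 2 ≤ d)
    (S : Fin n → Finset (Fin m))
    (hdeg : ∀ j : Fin m, (univ.filter fun i => j ∈ S i).card = d)
    (T : TieRule (Fin n) (Fin m)) (i : Fin n) (b : Fin n → Fin m → ℝ)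
    (H1 : ∀ i', i' ≠ i → ∀ j, j ∉ S i' → b i' j = 0)
    (H2 : ∀ i', i' ≠ i → ∀ j, j ∈ S i' → 0 < b i' j)
    (H3 : ∀ i', i' ≠ i → ∀ j', j' ∈ S i' → ∀ j, b i' j' ≠ b i j) :
    utility (fun i' => singleMinded (S i') 1) T b i =
      Set.indicator (⋂ j ∈ S i, AAset S i j) (fun _ => (1:ℝ)) b -
      ∑ j : Fin m, b i j * Set.indicator (AAset S i j) (fun _ => (1:ℝ)) b := by
  have hiff := alloc_iff hd S hdeg T i b H1 H2 H3
  unfold utility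
  have hval : singleMinded (S i) 1 (T.alloc b i) =
      Set.indicator (⋂ j ∈ S i, AAset S i j) (fun _ => (1:ℝ)) b := by
    unfold singleMinded
    by_cases hsub : S i ⊆ T.alloc b i
    · rw [if_pos hsub, Set.indicator_of_mem]
      exact Set.mem_iInter₂.mpr fun j hj => (hiff j).mp (hsub hj)
    · rw [if_neg hsub, Set.indicator_of_notMem]
      intro hmem
      exact hsub fun j hj => (hiff j).mpr (Set.mem_iInter₂.mp hmem j hj)
  have hpay : ∑ j ∈ T.alloc b i, b i j =
      ∑ j : Fin m, b i j * Set.indicator (AAset S i j) (fun _ => (1:ℝ)) b := by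
    have : ∀ j : Fin m, b i j * Set.indicator (AAset S i j) (fun _ => (1:ℝ)) b =
        if j ∈ T.alloc b i then b i j else 0 := by
      intro j
      by_cases hj : j ∈ T.alloc b i
      · rw [if_pos hj, Set.indicator_of_mem ((hiff j).mp hj), mul_one]
      · rw [if_neg hj, Set.indicator_of_notMem (fun hmem => hj ((hiff j).mpr hmem)), mul_zero]
    rw [Finset.sum_congr rfl (fun j _ => this j), Finset.sum_ite_mem, Finset.univ_inter]
  rw [hpay]
  simp only []
  rw [← hval]

end Pointwise

section IntPsi

lemma integral_psi {α : Type*} [MeasurableSpace α] (ν : Measure α) [IsProbabilityMeasure ν]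
    {m : ℕ} (W : Set α) (hW : MeasurableSet W) (A : Fin m → Set α)
    (hA : ∀ j, MeasurableSet (A j)) (q : Fin m → ℝ) :
    ∫ b, (Set.indicator W (fun _ => (1:ℝ)) b -
        ∑ j : Fin m, q j * Set.indicator (A j) (fun _ => (1:ℝ)) b) ∂ν
      = (ν W).toReal - ∑ j : Fin m, q j * (ν (A j)).toReal := by
  have hIW : Integrable (Set.indicator W fun _ => (1:ℝ)) ν :=
    (integrable_const (1:ℝ)).indicator hW
  have hIA : ∀ j : Fin m, Integrable
      (fun b => q j * Set.indicator (A j) (fun _ => (1:ℝ)) b) ν :=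
    fun j => (((integrable_const (1:ℝ)).indicator (hA j)).const_mul (q j))
  rw [integral_sub hIW (integrable_finset_sum univ (fun j _ => hIA j)),
    integral_finset_sum univ (fun j _ => hIA j)]
  have h1 : ∫ b, Set.indicator W (fun _ => (1:ℝ)) b ∂ν = (ν W).toReal := by
    rw [integral_indicator_const (1:ℝ) hW, smul_eq_mul, mul_one, measureReal_def]
  have h2 : ∀ j : Fin m, ∫ b, q j * Set.indicator (A j) (fun _ => (1:ℝ)) b ∂ν =
      q j * (ν (A j)).toReal := by
    intro j
    rw [integral_const_mul, integral_indicator_const (1:ℝ) (hA j), smul_eq_mul, mul_one, measureReal_def]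
  rw [h1, Finset.sum_congr rfl (fun j _ => h2 j)]

end IntPsi

section AMGM

variable {k d : ℕ} {m : ℕ}

lemma Greal_pow (hk : 2 ≤ k) (hd : 2 ≤ d) {y : ℝ} (hy : 0 ≤ y) :
    (Greal k d y)^(d-1) = (min ((k:ℝ) * y) 1) ^ ((1:ℝ)/((k:ℝ)-1)) := by
  have hk0 := kRpos hk
  have hkm1 := km1pos hk
  have hdm1 := km1pos hd
  by_cases h : y ≤ 1/(k:ℝ)
  · have hky : (k:ℝ) * y ≤ 1 := by
      rw [le_div_iff₀ hk0] at h
      linarith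
    have hky0 : 0 ≤ (k:ℝ) * y := by positivity
    have hmin : min ((k:ℝ)*y) 1 = (k:ℝ)*y := min_eq_left hky
    have hG : Greal k d y = ((k:ℝ)*y) ^ ((1:ℝ) / (((d:ℝ)-1)*((k:ℝ)-1))) := by
      unfold Greal
      rw [if_neg (not_lt.mpr hy), if_pos h]
    rw [hmin, hG, ← Real.rpow_natCast (((k:ℝ)*y) ^ ((1:ℝ)/(((d:ℝ)-1)*((k:ℝ)-1)))) (d-1),
      ← Real.rpow_mul hky0]
    congr 1
    have hcast : ((d - 1 : ℕ) : ℝ) = (d:ℝ) - 1 := by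
      have : (1:ℕ) ≤ d := by omega
      push_cast [this]
      ring
    rw [hcast]
    field_simp
  · have hky : (1:ℝ) ≤ (k:ℝ) * y := by
      rw [not_le, div_lt_iff₀ hk0] at h
      linarith
    have hmin : min ((k:ℝ)*y) 1 = 1 := min_eq_right hky
    have hG : Greal k d y = 1 := by
      unfold Greal
      rw [if_neg (not_lt.mpr hy), if_neg h]
    rw [hmin, hG, one_pow, Real.one_rpow]

lemma amgm (hk : 2 ≤ k) (hd : 2 ≤ d) (J : Finset (Fin m)) (hJ : J.card = k)
    (c : Fin m → ℝ) (hc : ∀ j, 0 ≤ c j) :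
    ∏ j ∈ J, (Greal k d (c j))^(d-1) ≤ ∑ j ∈ J, c j * (Greal k d (c j))^(d-1) := by
  have hk0 := kRpos hk
  have hkm1 := km1pos hk
  set u : Fin m → ℝ := fun j => min ((k:ℝ) * c j) 1 with hu
  have hu0 : ∀ j, 0 ≤ u j := fun j => le_min (mul_nonneg (Nat.cast_nonneg k) (hc j)) zero_le_one
  set t : Fin m → ℝ := fun j => (u j) ^ ((k:ℝ)/((k:ℝ)-1)) with ht
  have ht0 : ∀ j, 0 ≤ t j := fun j => Real.rpow_nonneg (hu0 j) _
  have hGu : ∀ j, (Greal k d (c j))^(d-1) = (u j) ^ ((1:ℝ)/((k:ℝ)-1)) :=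
    fun j => Greal_pow hk hd (hc j)
  have hut : ∀ j, (u j) ^ ((1:ℝ)/((k:ℝ)-1)) = (t j) ^ ((1:ℝ)/(k:ℝ)) := by
    intro j
    rw [ht]
    simp only []
    rw [← Real.rpow_mul (hu0 j)]
    congr 1
    field_simp
  have hsum : ∀ j, (1/(k:ℝ)) * t j ≤ c j * (u j) ^ ((1:ℝ)/((k:ℝ)-1)) := by
    intro j
    have h1 : t j = u j * (u j) ^ ((1:ℝ)/((k:ℝ)-1)) := by
      rw [ht]
      simp only []
      have : (k:ℝ)/((k:ℝ)-1) = 1 + 1/((k:ℝ)-1) := by field_simp; ring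
      rw [this, Real.rpow_add' (hu0 j) (by positivity), Real.rpow_one]
    have h2 : u j / (k:ℝ) ≤ c j := by
      rw [div_le_iff₀ hk0]
      calc u j ≤ (k:ℝ) * c j := min_le_left _ _
        _ = c j * (k:ℝ) := mul_comm _ _
    calc (1/(k:ℝ)) * t j = (u j / (k:ℝ)) * (u j) ^ ((1:ℝ)/((k:ℝ)-1)) := by
          rw [h1]; ring
      _ ≤ c j * (u j) ^ ((1:ℝ)/((k:ℝ)-1)) :=
          mul_le_mul_of_nonneg_right h2 (Real.rpow_nonneg (hu0 j) _)
  calc ∏ j ∈ J, (Greal k d (c j))^(d-1)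
      = ∏ j ∈ J, (t j) ^ ((1:ℝ)/(k:ℝ)) := by
        exact Finset.prod_congr rfl (fun j _ => by rw [hGu j, hut j])
    _ ≤ ∑ j ∈ J, (1/(k:ℝ)) * t j := by
        apply Real.geom_mean_le_arith_mean_weighted J (fun _ => 1/(k:ℝ)) t
          (fun j _ => by positivity) ?_ (fun j _ => ht0 j)
        rw [Finset.sum_const, hJ, nsmul_eq_mul]
        field_simp
    _ ≤ ∑ j ∈ J, c j * (u j) ^ ((1:ℝ)/((k:ℝ)-1)) :=
        Finset.sum_le_sum (fun j _ => hsum j)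
    _ = ∑ j ∈ J, c j * (Greal k d (c j))^(d-1) :=
        Finset.sum_congr rfl (fun j _ => by rw [hGu j])

/-- The equilibrium indifference identity. -/
lemma Greal_eval (hk : 2 ≤ k) (hd : 2 ≤ d) {x : ℝ} (hx : x ∈ Set.Ioc 0 (1/(k:ℝ))) :
    ((Greal k d x)^(d-1))^k = ((k:ℝ) * x) * (Greal k d x)^(d-1) := by
  have hk0 := kRpos hk
  have hkm1 := km1pos hk
  obtain ⟨hx0, hx1⟩ := hx
  have hkx : 0 < (k:ℝ) * x := by positivity
  have hG : (Greal k d x)^(d-1) = ((k:ℝ)*x) ^ ((1:ℝ)/((k:ℝ)-1)) := by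
    rw [Greal_pow hk hd (le_of_lt hx0)]
    congr 1
    apply min_eq_left
    rw [le_div_iff₀ hk0] at hx1
    linarith
  rw [hG, ← Real.rpow_natCast (((k:ℝ)*x) ^ ((1:ℝ)/((k:ℝ)-1))) k, ← Real.rpow_mul (le_of_lt hkx)]
  have harith : (1:ℝ)/((k:ℝ)-1) * (k:ℝ) = 1 + 1/((k:ℝ)-1) := by field_simp; try ring
  rw [harith, Real.rpow_add hkx, Real.rpow_one]

end AMGM

section Core

variable {n m : ℕ} {k d : ℕ}

lemma omega_ae (hk : 2 ≤ k) (hd : 2 ≤ d)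
    {μ : Measure ℝ} [IsProbabilityMeasure μ]
    (hIic : ∀ x : ℝ, μ (Set.Iic x) = ENNReal.ofReal (Greal k d x))
    (S : Fin n → Finset (Fin m))
    (σ : Fin n → Measure (Fin m → ℝ)) (hσ : ∀ i', σ i' = μ.map (bvec S i'))
    (i : Fin n) (c : Fin m → ℝ) :
    ∀ᵐ b ∂(Measure.pi (Function.update σ i (Measure.dirac c))),
      b i = c ∧ ∀ i', i' ≠ i →
        b i' ∈ GoodSet S i' (Set.Ioc 0 (1/(k:ℝ)) \ Set.range c) := by
  classical
  haveI hprob : ∀ i', IsProbabilityMeasure (σ i') := fun i' => by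
    rw [hσ i']; exact Measure.isProbabilityMeasure_map (measurable_bvec S i').aemeasurable
  set τ := Function.update σ i (Measure.dirac c) with hτdef
  haveI hprobτ : ∀ i', IsProbabilityMeasure (τ i') := fun i' => by
    by_cases h : i' = i
    · subst h; rw [hτdef, Function.update_self]; infer_instance
    · rw [hτdef, Function.update_of_ne h]; infer_instance
  set E : Set ℝ := Set.Ioc 0 (1/(k:ℝ)) \ Set.range c with hEdef
  have hEmeas : MeasurableSet E :=
    measurableSet_Ioc.diff ((Set.finite_range c).countable.measurableSet)
  have hGood1 : ∀ i', i' ≠ i → τ i' (GoodSet S i' E) = 1 := by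
    intro i' hi'
    rw [hτdef, Function.update_of_ne hi', hσ i',
      Measure.map_apply (measurable_bvec S i') (meas_GoodSet S i' E hEmeas)]
    refine le_antisymm prob_le_one ?_
    calc (1:ENNReal) = μ E := (mu_good hIic hk hd _ (Set.finite_range c).countable).symm
      _ ≤ μ (bvec S i' ⁻¹' GoodSet S i' E) :=
          measure_mono (fun x hx => bvec_mem_GoodSet S i' E x hx)
  rw [ae_iff]
  have hsub2 : {b : Fin n → Fin m → ℝ |
      ¬(b i = c ∧ ∀ i', i' ≠ i → b i' ∈ GoodSet S i' E)} ⊆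
      ((fun b : Fin n → Fin m → ℝ => b i) ⁻¹' ({c}ᶜ)) ∪
      ⋃ (i' : Fin n), ⋃ (_ : i' ≠ i),
        ((fun b : Fin n → Fin m → ℝ => b i') ⁻¹' ((GoodSet S i' E)ᶜ)) := by
    intro b hb
    simp only [Set.mem_setOf_eq] at hb
    rw [not_and_or] at hb
    rcases hb with hb | hb
    · left
      simpa using hb
    · right
      push_neg at hb
      obtain ⟨i', hi', hmem⟩ := hb
      exact Set.mem_iUnion.mpr ⟨i', Set.mem_iUnion.mpr ⟨hi', hmem⟩⟩
  refine measure_mono_null hsub2 (measure_union_null ?_ ?_)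
  · rw [pi_cyl τ i ({c}ᶜ)]
    have : τ i = Measure.dirac c := by rw [hτdef, Function.update_self]
    rw [this, Measure.dirac_apply' c (measurableSet_singleton c).compl]
    simp
  · refine measure_iUnion_null fun i' => measure_iUnion_null fun hi' => ?_
    rw [pi_cyl τ i' ((GoodSet S i' E)ᶜ)]
    rw [measure_compl (meas_GoodSet S i' E hEmeas) (measure_ne_top _ _), hGood1 i' hi']
    simp

lemma core_eq (hk : 2 ≤ k) (hd : 2 ≤ d)
    (S : Fin n → Finset (Fin m))
    (hdeg : ∀ j : Fin m, (univ.filter fun i => j ∈ S i).card = d)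
    (hinter : ∀ i i', i ≠ i' → (S i ∩ S i').card ≤ 1)
    {μ : Measure ℝ} [IsProbabilityMeasure μ]
    (hIic : ∀ x : ℝ, μ (Set.Iic x) = ENNReal.ofReal (Greal k d x))
    (σ : Fin n → Measure (Fin m → ℝ)) (hσ : ∀ i', σ i' = μ.map (bvec S i'))
    (T : TieRule (Fin n) (Fin m)) (i : Fin n) (c : Fin m → ℝ) :
    ∫ b, utility (fun i' => singleMinded (S i') 1) T b i
        ∂(Measure.pi (Function.update σ i (Measure.dirac c))) =
      (∏ j ∈ S i, (Greal k d (c j))^(d-1)) - (∑ j ∈ S i, c j * (Greal k d (c j))^(d-1))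
      - ∑ j ∈ univ \ S i, c j *
          ((Measure.pi (Function.update σ i (Measure.dirac c))) (Aset S i c j)).toReal := by
  classical
  haveI hprob : ∀ i', IsProbabilityMeasure (σ i') := fun i' => by
    rw [hσ i']; exact Measure.isProbabilityMeasure_map (measurable_bvec S i').aemeasurable
  set τ := Function.update σ i (Measure.dirac c) with hτdef
  haveI hprobτ : ∀ i', IsProbabilityMeasure (τ i') := fun i' => by
    by_cases h : i' = i
    · subst h; rw [hτdef, Function.update_self]; infer_instance
    · rw [hτdef, Function.update_of_ne h]; infer_instance
  have hτ' : ∀ i', i' ≠ i → τ i' = μ.map (bvec S i') := fun i' hi' => by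
    rw [hτdef, Function.update_of_ne hi', hσ i']
  have hae : ∀ᵐ b ∂(Measure.pi τ), utility (fun i' => singleMinded (S i') 1) T b i =
      Set.indicator (⋂ j ∈ S i, Aset S i c j) (fun _ => (1:ℝ)) b -
      ∑ j : Fin m, c j * Set.indicator (Aset S i c j) (fun _ => (1:ℝ)) b := by
    filter_upwards [omega_ae hk hd hIic S σ hσ i c] with b hb
    obtain ⟨hbi, hgood⟩ := hb
    have H1 : ∀ i', i' ≠ i → ∀ j, j ∉ S i' → b i' j = 0 := fun i' hi' j hj =>
      (hgood i' hi').1 j hj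
    have H2 : ∀ i', i' ≠ i → ∀ j, j ∈ S i' → 0 < b i' j := fun i' hi' j hj =>
      ((hgood i' hi').2.2 j hj).1.1
    have H3 : ∀ i', i' ≠ i → ∀ j', j' ∈ S i' → ∀ j, b i' j' ≠ b i j := by
      intro i' hi' j' hj' j heq
      apply ((hgood i' hi').2.2 j' hj').2
      rw [heq, hbi]
      exact Set.mem_range_self j
    rw [utility_formula hd S hdeg T i b H1 H2 H3]
    have hmemiff : ∀ j, b ∈ AAset S i j ↔ b ∈ Aset S i c j := by
      intro j
      unfold AAset Aset
      simp only [Set.mem_setOf_eq, hbi]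
    have hindA : ∀ j, Set.indicator (AAset S i j) (fun _ => (1:ℝ)) b =
        Set.indicator (Aset S i c j) (fun _ => (1:ℝ)) b := by
      intro j
      by_cases hA : b ∈ AAset S i j
      · rw [Set.indicator_of_mem hA, Set.indicator_of_mem ((hmemiff j).mp hA)]
      · rw [Set.indicator_of_notMem hA,
          Set.indicator_of_notMem (fun h => hA ((hmemiff j).mpr h))]
    have hindW : Set.indicator (⋂ j ∈ S i, AAset S i j) (fun _ => (1:ℝ)) b =
        Set.indicator (⋂ j ∈ S i, Aset S i c j) (fun _ => (1:ℝ)) b := by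
      by_cases hA : b ∈ ⋂ j ∈ S i, AAset S i j
      · rw [Set.indicator_of_mem hA, Set.indicator_of_mem
          (Set.mem_iInter₂.mpr fun j hj => (hmemiff j).mp (Set.mem_iInter₂.mp hA j hj))]
      · rw [Set.indicator_of_notMem hA, Set.indicator_of_notMem
          (fun h => hA (Set.mem_iInter₂.mpr fun j hj =>
            (hmemiff j).mpr (Set.mem_iInter₂.mp h j hj)))]
    rw [hindW]
    congr 1
    refine Finset.sum_congr rfl fun j _ => ?_
    rw [hindA j, hbi]
  rw [integral_congr_ae hae]
  have hWmeas : MeasurableSet (⋂ j ∈ S i, Aset S i c j) :=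
    MeasurableSet.biInter (Finset.countable_toSet _) (fun j _ => meas_Aset S i c j)
  rw [integral_psi (Measure.pi τ) _ hWmeas _ (fun j => meas_Aset S i c j) c]
  have hW : Measure.pi τ (⋂ j ∈ S i, Aset S i c j) =
      ∏ j ∈ S i, (ENNReal.ofReal (Greal k d (c j)))^(d-1) :=
    pi_rect hk hd S hdeg hinter hIic i τ hτ' c (S i) (Finset.Subset.refl _)
  have hAj : ∀ j ∈ S i, Measure.pi τ (Aset S i c j) =
      (ENNReal.ofReal (Greal k d (c j)))^(d-1) := by
    intro j hj
    have h := pi_rect hk hd S hdeg hinter hIic i τ hτ' c {j}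
      (Finset.singleton_subset_iff.mpr hj)
    simpa using h
  have hprodR : (∏ j ∈ S i, (ENNReal.ofReal (Greal k d (c j)))^(d-1)).toReal =
      ∏ j ∈ S i, (Greal k d (c j))^(d-1) := by
    rw [ENNReal.toReal_prod]
    exact Finset.prod_congr rfl fun j _ => by
      rw [ENNReal.toReal_pow, ENNReal.toReal_ofReal (Greal_nonneg hk hd _)]
  have hsplit : ∑ j : Fin m, c j * ((Measure.pi τ) (Aset S i c j)).toReal =
      ∑ j ∈ univ \ S i, c j * ((Measure.pi τ) (Aset S i c j)).toReal +
      ∑ j ∈ S i, c j * (Greal k d (c j))^(d-1) := by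
    rw [← Finset.sum_sdiff (Finset.subset_univ (S i))]
    congr 1
    refine Finset.sum_congr rfl fun j hj => ?_
    rw [hAj j hj, ENNReal.toReal_pow, ENNReal.toReal_ofReal (Greal_nonneg hk hd _)]
  rw [hW, hprodR, hsplit]
  ring

lemma core_le (hk : 2 ≤ k) (hd : 2 ≤ d)
    (S : Fin n → Finset (Fin m))
    (hcard : ∀ i, (S i).card = k)
    (hdeg : ∀ j : Fin m, (univ.filter fun i => j ∈ S i).card = d)
    (hinter : ∀ i i', i ≠ i' → (S i ∩ S i').card ≤ 1)
    {μ : Measure ℝ} [IsProbabilityMeasure μ]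
    (hIic : ∀ x : ℝ, μ (Set.Iic x) = ENNReal.ofReal (Greal k d x))
    (σ : Fin n → Measure (Fin m → ℝ)) (hσ : ∀ i', σ i' = μ.map (bvec S i'))
    (T : TieRule (Fin n) (Fin m)) (i : Fin n) (c : Fin m → ℝ) (hc : ∀ j, 0 ≤ c j) :
    ∫ b, utility (fun i' => singleMinded (S i') 1) T b i
        ∂(Measure.pi (Function.update σ i (Measure.dirac c))) ≤ 0 := by
  rw [core_eq hk hd S hdeg hinter hIic σ hσ T i c]
  have h1 := amgm hk hd (S i) (hcard i) c hc
  have h2 : (0:ℝ) ≤ ∑ j ∈ univ \ S i, c j *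
      ((Measure.pi (Function.update σ i (Measure.dirac c))) (Aset S i c j)).toReal :=
    Finset.sum_nonneg fun j _ => mul_nonneg (hc j) ENNReal.toReal_nonneg
  linarith

lemma core_x (hk : 2 ≤ k) (hd : 2 ≤ d)
    (S : Fin n → Finset (Fin m))
    (hcard : ∀ i, (S i).card = k)
    (hdeg : ∀ j : Fin m, (univ.filter fun i => j ∈ S i).card = d)
    (hinter : ∀ i i', i ≠ i' → (S i ∩ S i').card ≤ 1)
    {μ : Measure ℝ} [IsProbabilityMeasure μ]
    (hIic : ∀ x : ℝ, μ (Set.Iic x) = ENNReal.ofReal (Greal k d x))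
    (σ : Fin n → Measure (Fin m → ℝ)) (hσ : ∀ i', σ i' = μ.map (bvec S i'))
    (T : TieRule (Fin n) (Fin m)) (i : Fin n) {x : ℝ} (hx : x ∈ Set.Ioc 0 (1/(k:ℝ))) :
    ∫ b, utility (fun i' => singleMinded (S i') 1) T b i
        ∂(Measure.pi (Function.update σ i (Measure.dirac (bvec S i x)))) = 0 := by
  rw [core_eq hk hd S hdeg hinter hIic σ hσ T i (bvec S i x)]
  have hcS : ∀ j ∈ S i, bvec S i x j = x := fun j hj => by simp [bvec, hj]
  have hzero : ∑ j ∈ univ \ S i, bvec S i x j *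
      ((Measure.pi (Function.update σ i (Measure.dirac (bvec S i x))))
        (Aset S i (bvec S i x) j)).toReal = 0 := by
    refine Finset.sum_eq_zero fun j hj => ?_
    have : j ∉ S i := (Finset.mem_sdiff.mp hj).2
    simp [bvec, this]
  have hprod : ∏ j ∈ S i, (Greal k d (bvec S i x j))^(d-1) = ((Greal k d x)^(d-1))^k := by
    rw [Finset.prod_congr rfl (fun j hj => by rw [hcS j hj]), Finset.prod_const, hcard i]
  have hsum : ∑ j ∈ S i, bvec S i x j * (Greal k d (bvec S i x j))^(d-1) =
      (k:ℝ) * x * (Greal k d x)^(d-1) := by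
    rw [Finset.sum_congr rfl (fun j hj => by rw [hcS j hj]), Finset.sum_const, hcard i,
      nsmul_eq_mul]
    ring
  rw [hzero, hprod, hsum, Greal_eval hk hd hx]
  ring

end Core

section Fub

variable {n m : ℕ}

lemma fub {μ : Measure ℝ} [IsProbabilityMeasure μ] (S : Fin n → Finset (Fin m))
    (σ : Fin n → Measure (Fin m → ℝ)) (hσ : ∀ i', σ i' = μ.map (bvec S i'))
    (i : Fin n) (F : (Fin n → Fin m → ℝ) → ℝ) (hF : Measurable F)
    (C : ℝ) (hbd : ∀ b, |F b| ≤ C) :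
    ∫ b, F b ∂(Measure.pi σ) =
      ∫ x, ∫ b, F b ∂(Measure.pi (Function.update σ i
        (Measure.dirac (bvec S i x)))) ∂μ := by
  classical
  haveI hprob : ∀ i', IsProbabilityMeasure (σ i') := fun i' => by
    rw [hσ i']; exact Measure.isProbabilityMeasure_map (measurable_bvec S i').aemeasurable
  set p : Fin n → Prop := fun i' => i' = i with hp
  haveI hdp : DecidablePred p := fun i' => inferInstanceAs (Decidable (i' = i))
  letI : Fintype (Subtype p) := Subtype.fintype p
  letI : Fintype {i' // ¬ p i'} := Subtype.fintype _
  haveI huniq : Unique (Subtype p) := ⟨⟨⟨i, rfl⟩⟩, fun a => Subtype.ext a.prop⟩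
  haveI hps : ∀ i' : Subtype p, IsProbabilityMeasure (σ i'.val) := fun i' => hprob _
  haveI hps2 : ∀ i' : {i' // ¬ p i'}, IsProbabilityMeasure (σ i'.val) := fun i' => hprob _
  set e := MeasurableEquiv.piEquivPiSubtypeProd (fun _ : Fin n => Fin m → ℝ) p with he
  set u := MeasurableEquiv.piUnique (fun _ : Subtype p => Fin m → ℝ) with hu
  have hinner : ∀ c : Fin m → ℝ,
      ∫ b, F b ∂(Measure.pi (Function.update σ i (Measure.dirac c))) =
      ∫ y, F (e.symm (u.symm c, y)) ∂(Measure.pi (fun i' : {i' // ¬ p i'} => σ i'.val)) := by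
    intro c
    set τ := Function.update σ i (Measure.dirac c) with hτdef
    haveI : ∀ i', IsProbabilityMeasure (τ i') := fun i' => by
      by_cases h : i' = i
      · subst h; rw [hτdef, Function.update_self]; infer_instance
      · rw [hτdef, Function.update_of_ne h]; infer_instance
    have hmpτ := measurePreserving_piEquivPiSubtypeProd τ p
    have step1 : ∫ b, F b ∂(Measure.pi τ) = ∫ z, F (e.symm z)
        ∂((Measure.pi fun i' : Subtype p => τ i'.val).prod
          (Measure.pi fun i' : {i' // ¬ p i'} => τ i'.val)) := by
      have h := hmpτ.integral_comp' (f := e) (g := fun z => F (e.symm z))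
      simp only [MeasurableEquiv.symm_apply_apply] at h
      exact h
    have h1 : (fun i' : Subtype p => τ i'.val) = fun _ : Subtype p => Measure.dirac c := by
      funext i'
      have hv : i'.val = i := i'.prop
      rw [hτdef, hv, Function.update_self]
    have h1' : (fun i' : {i' // ¬ p i'} => τ i'.val) =
        fun i' : {i' // ¬ p i'} => σ i'.val := by
      funext i'
      rw [hτdef, Function.update_of_ne i'.prop]
    rw [step1, h1, h1']
    have h2 := measurePreserving_piUnique (fun _ : Subtype p => Measure.dirac c)
    have h3 : Measure.pi (fun _ : Subtype p => Measure.dirac c) =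
        (Measure.dirac c).map u.symm := by
      have h4 := MeasurableEquiv.map_symm_map (e := u)
        (μ := Measure.pi (fun _ : Subtype p => Measure.dirac c))
      rw [h2.map_eq] at h4
      exact h4.symm
    rw [h3, Measure.map_dirac' u.symm.measurable, Measure.dirac_prod,
      integral_map measurable_prodMk_left.aemeasurable
        (show AEStronglyMeasurable (fun z => F (e.symm z)) _ from
          (hF.comp e.symm.measurable).aestronglyMeasurable)]
  have hmp := measurePreserving_piEquivPiSubtypeProd σ p
  have hint : Integrable (fun z => F (e.symm z))
      ((Measure.pi fun i' : Subtype p => σ i'.val).prod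
        (Measure.pi (fun i' : {i' // ¬ p i'} => σ i'.val))) :=
    Integrable.mono' (integrable_const C)
      (show AEStronglyMeasurable (fun z => F (e.symm z)) _ from
        (hF.comp e.symm.measurable).aestronglyMeasurable)
      (ae_of_all _ fun z => hbd _)
  have hsm : StronglyMeasurable (fun z : (Fin m → ℝ) ×
      ({i' // ¬ p i'} → Fin m → ℝ) => F (e.symm (u.symm z.1, z.2))) :=
    (hF.comp (e.symm.measurable.comp
      ((u.symm.measurable.comp measurable_fst).prodMk measurable_snd))).stronglyMeasurable
  calc ∫ b, F b ∂(Measure.pi σ)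
      = ∫ z, F (e.symm z) ∂((Measure.pi fun i' : Subtype p => σ i'.val).prod
          (Measure.pi (fun i' : {i' // ¬ p i'} => σ i'.val))) := by
        have h := hmp.integral_comp' (f := e) (g := fun z => F (e.symm z))
        simp only [MeasurableEquiv.symm_apply_apply] at h
        exact h
    _ = ∫ v, ∫ y, F (e.symm (v, y)) ∂(Measure.pi (fun i' : {i' // ¬ p i'} => σ i'.val))
          ∂(Measure.pi fun i' : Subtype p => σ i'.val) :=
        integral_prod _ hint
    _ = ∫ w, ∫ y, F (e.symm (u.symm w, y))
          ∂(Measure.pi (fun i' : {i' // ¬ p i'} => σ i'.val)) ∂(σ i) := by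
        have h2 := measurePreserving_piUnique (fun i' : Subtype p => σ i'.val)
        have h3 := h2.integral_comp' (f := u) (g := fun w => ∫ y, F (e.symm (u.symm w, y))
          ∂(Measure.pi (fun i' : {i' // ¬ p i'} => σ i'.val)))
        simp only [MeasurableEquiv.symm_apply_apply] at h3
        rw [show ((default : Subtype p) : Fin n) = i from (default : Subtype p).prop] at h3
        exact h3
    _ = ∫ x, ∫ y, F (e.symm (u.symm (bvec S i x), y))
          ∂(Measure.pi (fun i' : {i' // ¬ p i'} => σ i'.val)) ∂μ := by
        rw [hσ i, integral_map (measurable_bvec S i).aemeasurable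
          hsm.integral_prod_right'.aestronglyMeasurable]
    _ = ∫ x, ∫ b, F b ∂(Measure.pi (Function.update σ i
          (Measure.dirac (bvec S i x)))) ∂μ := by
        refine integral_congr_ae (ae_of_all _ fun x => ?_)
        exact (hinner (bvec S i x)).symm

end Fub

section Main

variable {n m : ℕ} {k d : ℕ}

lemma tie_null (hk : 2 ≤ k) (hd : 2 ≤ d)
    {μ : Measure ℝ} [IsProbabilityMeasure μ]
    (hIic : ∀ x : ℝ, μ (Set.Iic x) = ENNReal.ofReal (Greal k d x))
    (S : Fin n → Finset (Fin m))
    (σ : Fin n → Measure (Fin m → ℝ)) (hσ : ∀ i', σ i' = μ.map (bvec S i'))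
    (i i' : Fin n) (hi' : i' ≠ i) (j' j : Fin m) (hj' : j' ∈ S i') :
    Measure.pi σ {b : Fin n → Fin m → ℝ | b i' j' = b i j} = 0 := by
  classical
  haveI : NullSingletonClass μ := mu_noAtoms hIic hk hd
  haveI hprob : ∀ i'', IsProbabilityMeasure (σ i'') := fun i'' => by
    rw [hσ i'']; exact Measure.isProbabilityMeasure_map (measurable_bvec S i'').aemeasurable
  set N := {b : Fin n → Fin m → ℝ | b i' j' = b i j} with hN
  have hNmeas : MeasurableSet N := measurableSet_eq_fun (meas_coord i' j') (meas_coord i j)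
  have hFmeas : Measurable (Set.indicator N (fun _ => (1:ℝ))) :=
    measurable_const.indicator hNmeas
  have hbd : ∀ b, |Set.indicator N (fun _ => (1:ℝ)) b| ≤ 1 := by
    intro b
    by_cases hb : b ∈ N
    · rw [Set.indicator_of_mem hb]; norm_num
    · rw [Set.indicator_of_notMem hb]; norm_num
  have hfub := fub S σ hσ i (Set.indicator N (fun _ => (1:ℝ))) hFmeas 1 hbd
  have hinner : ∀ x : ℝ, ∫ b, Set.indicator N (fun _ => (1:ℝ)) b
      ∂(Measure.pi (Function.update σ i (Measure.dirac (bvec S i x)))) = 0 := by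
    intro x
    set c := bvec S i x with hc
    set τ := Function.update σ i (Measure.dirac c) with hτdef
    haveI hprobτ : ∀ i'', IsProbabilityMeasure (τ i'') := fun i'' => by
      by_cases h : i'' = i
      · subst h; rw [hτdef, Function.update_self]; infer_instance
      · rw [hτdef, Function.update_of_ne h]; infer_instance
    have hNnull : Measure.pi τ N = 0 := by
      have hsub : N ⊆ ((fun b : Fin n → Fin m → ℝ => b i) ⁻¹' ({c}ᶜ)) ∪
          ((fun b : Fin n → Fin m → ℝ => b i') ⁻¹' {v : Fin m → ℝ | v j' = c j}) := by
        intro b hb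
        by_cases hbi : b i = c
        · right
          simp only [Set.mem_preimage, Set.mem_setOf_eq]
          rw [hN] at hb
          simp only [Set.mem_setOf_eq] at hb
          rw [hb, hbi]
        · left
          simp only [Set.mem_preimage, Set.mem_compl_iff, Set.mem_singleton_iff]
          exact hbi
      refine measure_mono_null hsub (measure_union_null ?_ ?_)
      · rw [pi_cyl τ i ({c}ᶜ)]
        have : τ i = Measure.dirac c := by rw [hτdef, Function.update_self]
        rw [this, Measure.dirac_apply' c (measurableSet_singleton c).compl]
        simp
      · rw [pi_cyl τ i' {v : Fin m → ℝ | v j' = c j}]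
        have : τ i' = μ.map (bvec S i') := by rw [hτdef, Function.update_of_ne hi', hσ i']
        rw [this, Measure.map_apply (measurable_bvec S i')
          (measurableSet_eq_fun (measurable_pi_apply j') measurable_const)]
        have : bvec S i' ⁻¹' {v : Fin m → ℝ | v j' = c j} = {c j} := by
          ext y
          simp only [Set.mem_preimage, Set.mem_setOf_eq, Set.mem_singleton_iff, bvec,
            if_pos hj']
        rw [this]
        exact measure_singleton _
    rw [integral_indicator_const (1:ℝ) hNmeas, measureReal_def, hNnull]
    simp
  rw [integral_indicator_const (1:ℝ) hNmeas] at hfub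
  have h0 : ∫ x, ∫ b, Set.indicator N (fun _ => (1:ℝ)) b
      ∂(Measure.pi (Function.update σ i (Measure.dirac (bvec S i x)))) ∂μ = 0 := by
    rw [integral_congr_ae (ae_of_all _ fun x => hinner x)]
    simp
  rw [h0] at hfub
  have := measure_ne_top (Measure.pi σ) N
  simp only [smul_eq_mul, mul_one] at hfub
  exact (ENNReal.toReal_eq_zero_iff _).mp hfub |>.resolve_right this

lemma omega_sigma (hk : 2 ≤ k) (hd : 2 ≤ d)
    {μ : Measure ℝ} [IsProbabilityMeasure μ]
    (hIic : ∀ x : ℝ, μ (Set.Iic x) = ENNReal.ofReal (Greal k d x))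
    (S : Fin n → Finset (Fin m))
    (σ : Fin n → Measure (Fin m → ℝ)) (hσ : ∀ i', σ i' = μ.map (bvec S i'))
    (i : Fin n) :
    ∀ᵐ b ∂(Measure.pi σ),
      (∀ i'', b i'' ∈ GoodSet S i'' (Set.Ioc 0 (1/(k:ℝ)))) ∧
      (∀ i', i' ≠ i → ∀ j' ∈ S i', ∀ j : Fin m, b i' j' ≠ b i j) := by
  classical
  haveI hprob : ∀ i'', IsProbabilityMeasure (σ i'') := fun i'' => by
    rw [hσ i'']; exact Measure.isProbabilityMeasure_map (measurable_bvec S i'').aemeasurable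
  have hEmeas : MeasurableSet (Set.Ioc (0:ℝ) (1/(k:ℝ))) := measurableSet_Ioc
  have hGood1 : ∀ i'', σ i'' (GoodSet S i'' (Set.Ioc 0 (1/(k:ℝ)))) = 1 := by
    intro i''
    rw [hσ i'', Measure.map_apply (measurable_bvec S i'') (meas_GoodSet S i'' _ hEmeas)]
    refine le_antisymm prob_le_one ?_
    calc (1:ENNReal) = μ (Set.Ioc 0 (1/(k:ℝ))) := (mu_Ioc01 hIic hk hd).symm
      _ ≤ μ (bvec S i'' ⁻¹' GoodSet S i'' (Set.Ioc 0 (1/(k:ℝ)))) :=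
          measure_mono (fun x hx => bvec_mem_GoodSet S i'' _ x hx)
  rw [ae_iff]
  have hsub : {b : Fin n → Fin m → ℝ | ¬((∀ i'', b i'' ∈ GoodSet S i'' (Set.Ioc 0 (1/(k:ℝ)))) ∧
      (∀ i', i' ≠ i → ∀ j' ∈ S i', ∀ j : Fin m, b i' j' ≠ b i j))} ⊆
      (⋃ (i'' : Fin n),
        ((fun b : Fin n → Fin m → ℝ => b i'') ⁻¹' ((GoodSet S i'' (Set.Ioc 0 (1/(k:ℝ))))ᶜ))) ∪
      ⋃ (i' : Fin n), ⋃ (_ : i' ≠ i), ⋃ (j' : Fin m), ⋃ (_ : j' ∈ S i'), ⋃ (j : Fin m),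
        {b : Fin n → Fin m → ℝ | b i' j' = b i j} := by
    intro b hb
    simp only [Set.mem_setOf_eq] at hb
    rw [not_and_or] at hb
    rcases hb with hb | hb
    · left
      push_neg at hb
      obtain ⟨i'', hmem⟩ := hb
      exact Set.mem_iUnion.mpr ⟨i'', hmem⟩
    · right
      push_neg at hb
      obtain ⟨i', hi', j', hj', j, heq⟩ := hb
      exact Set.mem_iUnion.mpr ⟨i', Set.mem_iUnion.mpr ⟨hi', Set.mem_iUnion.mpr ⟨j',
        Set.mem_iUnion.mpr ⟨hj', Set.mem_iUnion.mpr ⟨j, heq⟩⟩⟩⟩⟩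
  refine measure_mono_null hsub (measure_union_null ?_ ?_)
  · refine measure_iUnion_null fun i'' => ?_
    rw [pi_cyl σ i'' _]
    rw [measure_compl (meas_GoodSet S i'' _ hEmeas) (measure_ne_top _ _), hGood1 i'']
    simp
  · refine measure_iUnion_null fun i' => measure_iUnion_null fun hi' =>
      measure_iUnion_null fun j' => measure_iUnion_null fun hj' =>
      measure_iUnion_null fun j => ?_
    exact tie_null hk hd hIic S σ hσ i i' hi' j' j hj'

lemma exp_zero (hk : 2 ≤ k) (hd : 2 ≤ d)
    (S : Fin n → Finset (Fin m))
    (hcard : ∀ i, (S i).card = k)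
    (hdeg : ∀ j : Fin m, (univ.filter fun i => j ∈ S i).card = d)
    (hinter : ∀ i i', i ≠ i' → (S i ∩ S i').card ≤ 1)
    {μ : Measure ℝ} [IsProbabilityMeasure μ]
    (hIic : ∀ x : ℝ, μ (Set.Iic x) = ENNReal.ofReal (Greal k d x))
    (σ : Fin n → Measure (Fin m → ℝ)) (hσ : ∀ i', σ i' = μ.map (bvec S i'))
    (T : TieRule (Fin n) (Fin m)) (i : Fin n) :
    ∫ b, utility (fun i' => singleMinded (S i') 1) T b i ∂(Measure.pi σ) = 0 := by
  classical
  haveI hprob : ∀ i'', IsProbabilityMeasure (σ i'') := fun i'' => by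
    rw [hσ i'']; exact Measure.isProbabilityMeasure_map (measurable_bvec S i'').aemeasurable
  set ψ : (Fin n → Fin m → ℝ) → ℝ := fun b =>
    Set.indicator (⋂ j ∈ S i, AAset S i j) (fun _ => (1:ℝ)) b -
    ∑ j : Fin m, (if j ∈ S i then min (max (b i j) 0) (1/(k:ℝ)) else 0) *
      Set.indicator (AAset S i j) (fun _ => (1:ℝ)) b with hψ
  have hWmeas : MeasurableSet (⋂ j ∈ S i, AAset S i j) :=
    MeasurableSet.biInter (Finset.countable_toSet _) (fun j _ => meas_AAset S i j)
  have hψmeas : Measurable ψ := by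
    rw [hψ]
    refine Measurable.sub (measurable_const.indicator hWmeas) ?_
    refine Finset.measurable_sum univ fun j _ => ?_
    refine Measurable.mul ?_ (measurable_const.indicator (meas_AAset S i j))
    by_cases hj : j ∈ S i
    · simp only [hj, if_true]
      exact ((meas_coord i j).max measurable_const).min measurable_const
    · simp only [hj, if_false]
      exact measurable_const
  have hkinv : (0:ℝ) ≤ 1/(k:ℝ) := by positivity
  have hψbd : ∀ b, |ψ b| ≤ 1 + (m:ℝ) * (1/(k:ℝ)) := by
    intro b
    rw [hψ]
    simp only []
    have h1 : |Set.indicator (⋂ j ∈ S i, AAset S i j) (fun _ => (1:ℝ)) b| ≤ 1 := by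
      by_cases hb : b ∈ ⋂ j ∈ S i, AAset S i j
      · rw [Set.indicator_of_mem hb]; norm_num
      · rw [Set.indicator_of_notMem hb]; norm_num
    have h2 : |∑ j : Fin m, (if j ∈ S i then min (max (b i j) 0) (1/(k:ℝ)) else 0) *
        Set.indicator (AAset S i j) (fun _ => (1:ℝ)) b| ≤ (m:ℝ) * (1/(k:ℝ)) := by
      calc |∑ j : Fin m, (if j ∈ S i then min (max (b i j) 0) (1/(k:ℝ)) else 0) *
          Set.indicator (AAset S i j) (fun _ => (1:ℝ)) b|
          ≤ ∑ j : Fin m, |(if j ∈ S i then min (max (b i j) 0) (1/(k:ℝ)) else 0) *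
            Set.indicator (AAset S i j) (fun _ => (1:ℝ)) b| := Finset.abs_sum_le_sum_abs _ _
        _ ≤ ∑ _j : Fin m, 1/(k:ℝ) := by
            refine Finset.sum_le_sum fun j _ => ?_
            rw [abs_mul]
            have hc : |(if j ∈ S i then min (max (b i j) 0) (1/(k:ℝ)) else 0)| ≤ 1/(k:ℝ) := by
              by_cases hj : j ∈ S i
              · simp only [hj, if_true]
                rw [abs_of_nonneg (le_min (le_max_right _ _) hkinv)]
                exact min_le_right _ _
              · simp only [hj, if_false, abs_zero]
                exact hkinv
            have hi2 : |Set.indicator (AAset S i j) (fun _ => (1:ℝ)) b| ≤ 1 := by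
              by_cases hb : b ∈ AAset S i j
              · rw [Set.indicator_of_mem hb]; norm_num
              · rw [Set.indicator_of_notMem hb]; norm_num
            calc |(if j ∈ S i then min (max (b i j) 0) (1/(k:ℝ)) else 0)| *
                |Set.indicator (AAset S i j) (fun _ => (1:ℝ)) b| ≤ (1/(k:ℝ)) * 1 :=
                  mul_le_mul hc hi2 (abs_nonneg _) hkinv
              _ = 1/(k:ℝ) := mul_one _
        _ = (m:ℝ) * (1/(k:ℝ)) := by
            rw [Finset.sum_const, Finset.card_univ, Fintype.card_fin, nsmul_eq_mul]
    calc |Set.indicator (⋂ j ∈ S i, AAset S i j) (fun _ => (1:ℝ)) b -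
        ∑ j : Fin m, (if j ∈ S i then min (max (b i j) 0) (1/(k:ℝ)) else 0) *
          Set.indicator (AAset S i j) (fun _ => (1:ℝ)) b| ≤
        |Set.indicator (⋂ j ∈ S i, AAset S i j) (fun _ => (1:ℝ)) b| +
        |∑ j : Fin m, (if j ∈ S i then min (max (b i j) 0) (1/(k:ℝ)) else 0) *
          Set.indicator (AAset S i j) (fun _ => (1:ℝ)) b| := abs_sub _ _
      _ ≤ 1 + (m:ℝ) * (1/(k:ℝ)) := add_le_add h1 h2
  -- utility agrees a.e. with ψ
  have hae : ∀ᵐ b ∂(Measure.pi σ),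
      utility (fun i' => singleMinded (S i') 1) T b i = ψ b := by
    filter_upwards [omega_sigma hk hd hIic S σ hσ i] with b hb
    obtain ⟨hgood, hties⟩ := hb
    have H1 : ∀ i', i' ≠ i → ∀ j, j ∉ S i' → b i' j = 0 := fun i' _ j hj =>
      (hgood i').1 j hj
    have H2 : ∀ i', i' ≠ i → ∀ j, j ∈ S i' → 0 < b i' j := fun i' _ j hj =>
      ((hgood i').2.2 j hj).1
    have H3 : ∀ i', i' ≠ i → ∀ j', j' ∈ S i' → ∀ j, b i' j' ≠ b i j := hties
    rw [utility_formula hd S hdeg T i b H1 H2 H3, hψ]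
    simp only []
    congr 1
    refine Finset.sum_congr rfl fun j _ => ?_
    congr 1
    by_cases hj : j ∈ S i
    · simp only [hj, if_true]
      have hmem := (hgood i).2.2 j hj
      obtain ⟨h0, h1⟩ := hmem
      rw [max_eq_left (le_of_lt h0), min_eq_left h1]
    · simp only [hj, if_false]
      exact (hgood i).1 j hj
  rw [integral_congr_ae hae]
  rw [fub S σ hσ i ψ hψmeas (1 + (m:ℝ) * (1/(k:ℝ))) hψbd]
  -- the inner integral vanishes for a.e. x
  have hinner : ∀ x ∈ Set.Ioc (0:ℝ) (1/(k:ℝ)),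
      ∫ b, ψ b ∂(Measure.pi (Function.update σ i (Measure.dirac (bvec S i x)))) = 0 := by
    intro x hx
    set c := bvec S i x with hc
    have haeψ : ∀ᵐ b ∂(Measure.pi (Function.update σ i (Measure.dirac c))),
        ψ b = utility (fun i' => singleMinded (S i') 1) T b i := by
      filter_upwards [omega_ae hk hd hIic S σ hσ i c] with b hb
      obtain ⟨hbi, hgood⟩ := hb
      have H1 : ∀ i', i' ≠ i → ∀ j, j ∉ S i' → b i' j = 0 := fun i' hi' j hj =>
        (hgood i' hi').1 j hj
      have H2 : ∀ i', i' ≠ i → ∀ j, j ∈ S i' → 0 < b i' j := fun i' hi' j hj =>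
        ((hgood i' hi').2.2 j hj).1.1
      have H3 : ∀ i', i' ≠ i → ∀ j', j' ∈ S i' → ∀ j, b i' j' ≠ b i j := by
        intro i' hi' j' hj' j heq
        apply ((hgood i' hi').2.2 j' hj').2
        rw [heq, hbi]
        exact Set.mem_range_self j
      rw [utility_formula hd S hdeg T i b H1 H2 H3, hψ]
      simp only []
      congr 1
      refine Finset.sum_congr rfl fun j _ => ?_
      congr 1
      have hbij : b i j = c j := by rw [hbi]
      by_cases hj : j ∈ S i
      · simp only [hj, if_true]
        have hcj : c j = x := by rw [hc]; simp [bvec, hj]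
        rw [hbij, hcj, max_eq_left (le_of_lt hx.1), min_eq_left hx.2]
      · simp only [hj, if_false]
        have hcj : c j = 0 := by rw [hc]; simp [bvec, hj]
        rw [hbij, hcj]
    rw [integral_congr_ae haeψ]
    exact core_x hk hd S hcard hdeg hinter hIic σ hσ T i hx
  have haex : ∀ᵐ x ∂μ, x ∈ Set.Ioc (0:ℝ) (1/(k:ℝ)) := by
    rw [ae_iff]
    have : {x : ℝ | ¬ x ∈ Set.Ioc (0:ℝ) (1/(k:ℝ))} = (Set.Ioc (0:ℝ) (1/(k:ℝ)))ᶜ := rfl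
    rw [this, measure_compl measurableSet_Ioc (measure_ne_top _ _), mu_Ioc01 hIic hk hd]
    simp
  calc ∫ x, ∫ b, ψ b ∂(Measure.pi (Function.update σ i
        (Measure.dirac (bvec S i x)))) ∂μ
      = ∫ x, (0:ℝ) ∂μ := by
        refine integral_congr_ae ?_
        filter_upwards [haex] with x hx
        exact hinner x hx
    _ = 0 := integral_zero _ _

end Main

end

end SMNAux


/-- Single-minded bidders, each desiring a set `S i` of exactly `k` items with
value `1`, each item desired by exactly `d` bidders, and `|S i ∩ S i'| ≤ 1` for `i ≠ i'`.
If every bidder draws `x` from the CDF `G(x) = (kx)^(1/((d-1)(k-1)))` on `[0,1/k]` and bids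
`x` on every item of `S i` and `0` elsewhere, then this is a mixed Nash equilibrium under
any tie-breaking rule, and every bidder's expected utility is `0`. -/
theorem single_minded_mixed_nash {n m : ℕ} (k d : ℕ) (hk : 2 ≤ k) (hd : 2 ≤ d)
    (S : Fin n → Finset (Fin m))
    (hcard : ∀ i, (S i).card = k)
    (hdeg : ∀ j : Fin m, (Finset.univ.filter fun i => j ∈ S i).card = d)
    (hinter : ∀ i i', i ≠ i' → (S i ∩ S i').card ≤ 1)
    (μ : Measure ℝ) (hμ : IsProbabilityMeasure μ)
    (hcdf : ∀ x : ℝ, μ (Set.Iic x) =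
      if x < 0 then 0
      else if x ≤ 1 / k then
        ENNReal.ofReal (((k : ℝ) * x) ^ ((1 : ℝ) / (((d : ℝ) - 1) * ((k : ℝ) - 1))))
      else 1)
    (σ : Fin n → Measure (Fin m → ℝ))
    (hσ : ∀ i, σ i = μ.map (fun x => fun j : Fin m => if j ∈ S i then x else 0))
    (T : TieRule (Fin n) (Fin m)) :
    MixedNash (fun i => singleMinded (S i) 1) T σ ∧
    ∀ i, expectedUtility (fun i => singleMinded (S i) 1) T σ i = 0 := by
  haveI := hμ
  have hIic : ∀ x : ℝ, μ (Set.Iic x) = ENNReal.ofReal (SMNAux.Greal k d x) := by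
    intro x
    rw [hcdf x]
    unfold SMNAux.Greal
    split_ifs
    · simp
    · rfl
    · simp
  have hσ' : ∀ i', σ i' = μ.map (SMNAux.bvec S i') := fun i' => hσ i'
  constructor
  · intro i b' hb'
    calc expectedUtility (fun i => singleMinded (S i) 1) T
          (Function.update σ i (Measure.dirac b')) i
        ≤ 0 := SMNAux.core_le hk hd S hcard hdeg hinter hIic σ hσ' T i b' hb'
      _ = expectedUtility (fun i => singleMinded (S i) 1) T σ i :=
          (SMNAux.exp_zero hk hd S hcard hdeg hinter hIic σ hσ' T i).symm
  · intro i
    exact SMNAux.exp_zero hk hd S hcard hdeg hinter hIic σ hσ' T i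
end

section
/- Let ℓ ≥ 2 and m = ℓ², with the items indexed by pairs (i,j) for i,j ∈ {1,…,ℓ}, and consider 2ℓ single-minded bidders: for each i a row bidder whose valuation is ℓ on every set containing row i = {(i,j) : 1 ≤ j ≤ ℓ} and 0 otherwise, and for each j a column bidder whose valuation is ℓ on every set containing column j = {(i,j) : 1 ≤ i ≤ ℓ} and 0 otherwise. Then the simultaneous first-price auction game for these valuations has, for a suitable tie-breaking rule, a pure Nash equilibrium whose social welfare is ℓ², which equals the optimal social welfare (so price of stability 1), and it also has a mixed Nash equilibrium whose expected social welfare is at most 2ℓ; hence its price of anarchy is at least ℓ/2 = √m/2. -/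
open MeasureTheory Finset

namespace RCG

variable {l : ℕ}

abbrev NN (l : ℕ) := Fin l ⊕ Fin l
abbrev MM (l : ℕ) := Fin l × Fin l

/-- the demanded set of each bidder -/
def own : NN l → Finset (MM l) :=
  Sum.elim (fun a => Finset.univ.filter fun q : MM l => q.1 = a)
    (fun b => Finset.univ.filter fun q : MM l => q.2 = b)

/-- the `j`-th item of bidder `i`'s demanded set -/
def itm : NN l → Fin l → MM l :=
  Sum.elim (fun a j => (a, j)) (fun b j => (j, b))

/-- the other owner of the `j`-th item of bidder `i` -/
def oppo : NN l → Fin l → NN l :=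
  Sum.elim (fun _ j => Sum.inr j) (fun _ j => Sum.inl j)

/-- the index of item `q` in `own i` -/
def idx : NN l → MM l → Fin l :=
  Sum.elim (fun _ q => q.2) (fun _ q => q.1)

lemma mem_own_iff {k : NN l} {q : MM l} : q ∈ own k ↔ k = Sum.inl q.1 ∨ k = Sum.inr q.2 := by
  cases k with
  | inl a => simp [own, eq_comm]
  | inr b => simp [own, eq_comm]

lemma itm_mem_own (i : NN l) (j : Fin l) : itm i j ∈ own i := by
  cases i <;> simp [own, itm]

lemma itm_mem_own_oppo (i : NN l) (j : Fin l) : itm i j ∈ own (oppo i j) := by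
  cases i <;> simp [own, itm, oppo]

lemma oppo_ne (i : NN l) (j : Fin l) : oppo i j ≠ i := by
  cases i <;> simp [oppo]

lemma idx_itm (i : NN l) (j : Fin l) : idx i (itm i j) = j := by
  cases i <;> simp [idx, itm]

lemma itm_idx {i : NN l} {q : MM l} (h : q ∈ own i) : itm i (idx i q) = q := by
  cases i with
  | inl a => simp [own] at h; simp [idx, itm, ← h]
  | inr b => simp [own] at h; simp [idx, itm, ← h]

lemma itm_injective (i : NN l) : Function.Injective (itm i) := by
  intro j j' h; cases i <;> simpa [itm, Prod.ext_iff] using h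

/-- the two owners of an item `q = itm i j` are `i` and `oppo i j`. -/
lemma own_itm_cases {i k : NN l} {j : Fin l} (h : itm i j ∈ own k) :
    k = i ∨ k = oppo i j := by
  rcases mem_own_iff.1 h with h' | h' <;> cases i <;>
    simp_all [itm, oppo]

lemma own_eq_image (i : NN l) : own i = Finset.image (itm i) Finset.univ := by
  ext q
  constructor
  · intro h; exact Finset.mem_image.2 ⟨idx i q, Finset.mem_univ _, itm_idx h⟩
  · intro h; rcases Finset.mem_image.1 h with ⟨j, _, rfl⟩; exact itm_mem_own i j

lemma sum_own (i : NN l) (f : MM l → ℝ) : ∑ q ∈ own i, f q = ∑ j, f (itm i j) := by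
  rw [own_eq_image, Finset.sum_image (fun j _ j' _ h => itm_injective i h)]

lemma card_own (i : NN l) : (own i).card = l := by
  rw [own_eq_image, Finset.card_image_of_injective _ (itm_injective i)]
  simp

lemma own_nonempty (hl : 0 < l) (i : NN l) : (own i).Nonempty := by
  rw [← Finset.card_pos, card_own]; exact hl

section TieA

variable [NeZero l]

/-- winner of item `q` under bids `b` : the row owner if he is a top bidder, else some
top bidder. -/
noncomputable def winnerA (b : NN l → MM l → ℝ) (q : MM l) : NN l :=
  if ∀ k, b k q ≤ b (Sum.inl q.1) q then Sum.inl q.1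
  else Classical.choose (Finite.exists_max (fun k => b k q))

lemma winnerA_highest (b : NN l → MM l → ℝ) (q : MM l) (k : NN l) :
    b k q ≤ b (winnerA b q) q := by
  unfold winnerA
  split
  · next h => exact h k
  · exact Classical.choose_spec (Finite.exists_max (fun k => b k q)) k

/-- The tie rule used for the good pure equilibrium. -/
noncomputable def TA (l : ℕ) [NeZero l] : TieRule (NN l) (MM l) where
  alloc b i := Finset.univ.filter (fun q => winnerA b q = i)
  partition b q := by
    refine ⟨winnerA b q, by simp, fun k hk => ?_⟩
    symm; simpa using hk
  highest b i q hq k := by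
    simp only [Finset.mem_filter] at hq
    rw [← hq.2]; exact winnerA_highest b q k

/-- the pure equilibrium bid profile -/
noncomputable def beq : NN l → MM l → ℝ := fun i q => if q ∈ own i then 1 else 0

lemma beq_nonneg (i : NN l) (q : MM l) : 0 ≤ beq i q := by
  unfold beq; split <;> norm_num

lemma winnerA_beq (q : MM l) : winnerA (beq : NN l → MM l → ℝ) q = Sum.inl q.1 := by
  unfold winnerA
  have : ∀ k, beq k q ≤ beq (Sum.inl q.1) q := by
    intro k
    have h1 : beq (Sum.inl q.1) q = 1 := by
      simp [beq, mem_own_iff]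
    rw [h1]; unfold beq; split <;> norm_num
  simp [this]

lemma TA_alloc_beq_inl (a : Fin l) :
    (TA l).alloc beq (Sum.inl a) = own (Sum.inl a) := by
  ext q
  simp [TA, winnerA_beq, mem_own_iff, eq_comm]

lemma TA_alloc_beq_inr (c : Fin l) :
    (TA l).alloc beq (Sum.inr c) = ∅ := by
  ext q
  simp [TA, winnerA_beq]

end TieA


section Vfacts
variable {l : ℕ}
variable {v : NN l → Finset (MM l) → ℝ} (hv : ∀ i, v i = singleMinded (own i) (l : ℝ))

include hv

lemma v_apply (i : NN l) (S : Finset (MM l)) :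
    v i S = if own i ⊆ S then (l : ℝ) else 0 := by rw [hv i]; rfl

lemma v_nonneg (i : NN l) (S : Finset (MM l)) : 0 ≤ v i S := by
  rw [v_apply hv]; split <;> positivity

lemma v_le (i : NN l) (S : Finset (MM l)) : v i S ≤ (l : ℝ) := by
  rw [v_apply hv]; split
  · exact le_refl _
  · positivity

end Vfacts

section PartAMain
variable {l : ℕ} [NeZero l]
variable {v : NN l → Finset (MM l) → ℝ} (hv : ∀ i, v i = singleMinded (own i) (l : ℝ))

include hv

lemma utility_beq (i : NN l) : utility v (TA l) (beq : NN l → MM l → ℝ) i = 0 := by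
  cases i with
  | inl a =>
      rw [utility, TA_alloc_beq_inl, v_apply hv]
      have h1 : ∑ q ∈ own (Sum.inl a : NN l), beq (Sum.inl a) q = l := by
        have he : ∀ q ∈ own (Sum.inl a : NN l), beq (Sum.inl a) q = 1 := by
          intro q hq; simp [beq, hq]
        rw [Finset.sum_congr rfl he]
        simp [card_own]
      rw [h1]; simp
  | inr c =>
      rw [utility, TA_alloc_beq_inr, v_apply hv]
      have : ¬ own (Sum.inr c : NN l) ⊆ ∅ := by
        intro h
        rcases own_nonempty (Nat.pos_of_ne_zero (NeZero.ne l)) (Sum.inr c : NN l) with ⟨q, hq⟩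
        simpa using h hq
      simp [this]

lemma pureNash_beq : PureNash v (TA l) (beq : NN l → MM l → ℝ) := by
  intro i b' hb'
  rw [utility_beq hv]
  set b₂ := Function.update (beq : NN l → MM l → ℝ) i b' with hb₂
  set A := (TA l).alloc b₂ i with hA
  have hpay_item : ∀ j : Fin l, itm i j ∈ A → (1:ℝ) ≤ b' (itm i j) := by
    intro j hj
    have h := (TA l).highest b₂ i (itm i j) hj (oppo i j)
    have h2 : b₂ (oppo i j) (itm i j) = 1 := by
      rw [hb₂, Function.update_of_ne (oppo_ne i j), beq, if_pos (itm_mem_own_oppo i j)]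
    have h3 : b₂ i (itm i j) = b' (itm i j) := by rw [hb₂, Function.update_self]
    rw [h2, h3] at h; exact h
  rw [utility, ← hA, v_apply hv]
  have hb2i : ∀ q, b₂ i q = b' q := fun q => by rw [hb₂, Function.update_self]
  by_cases hsub : own i ⊆ A
  · rw [if_pos hsub]
    have hpay : (l : ℝ) ≤ ∑ q ∈ A, b₂ i q := by
      calc (l : ℝ) = ∑ q ∈ own i, (1:ℝ) := by simp [card_own]
        _ ≤ ∑ q ∈ own i, b₂ i q := by
            apply Finset.sum_le_sum
            intro q hq
            rw [hb2i]
            have := hpay_item (idx i q) (by rw [itm_idx hq]; exact hsub hq)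
            rwa [itm_idx hq] at this
        _ ≤ ∑ q ∈ A, b₂ i q := by
            apply Finset.sum_le_sum_of_subset_of_nonneg hsub
            intro q _ _; rw [hb2i]; exact hb' q
    linarith
  · rw [if_neg hsub]
    have : 0 ≤ ∑ q ∈ A, b₂ i q :=
      Finset.sum_nonneg (fun q _ => by rw [hb2i]; exact hb' q)
    linarith

lemma welfare_opt : welfare v (fun i : NN l =>
    Sum.elim (fun a => own (Sum.inl a : NN l)) (fun _ => (∅ : Finset (MM l))) i) = (l:ℝ)^2 := by
  rw [welfare, Fintype.sum_sum_type]
  have h1 : ∀ a : Fin l, v (Sum.inl a) (own (Sum.inl a : NN l)) = l := by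
    intro a; rw [v_apply hv, if_pos (subset_refl _)]
  have h2 : ∀ c : Fin l, v (Sum.inr c) (∅ : Finset (MM l)) = 0 := by
    intro c; rw [v_apply hv, if_neg]
    intro h
    rcases own_nonempty (Nat.pos_of_ne_zero (NeZero.ne l)) (Sum.inr c : NN l) with ⟨q, hq⟩
    simpa using h hq
  simp only [Sum.elim_inl, Sum.elim_inr, h1, h2]
  simp [sq]

lemma welfare_TA_beq : welfare v ((TA l).alloc (beq : NN l → MM l → ℝ)) = (l:ℝ)^2 := by
  have : (TA l).alloc (beq : NN l → MM l → ℝ) = (fun i : NN l =>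
      Sum.elim (fun a => own (Sum.inl a : NN l)) (fun _ => (∅ : Finset (MM l))) i) := by
    funext i; cases i with
    | inl a => simpa using TA_alloc_beq_inl a
    | inr c => simpa using TA_alloc_beq_inr c
  rw [this, welfare_opt hv]

lemma welfare_le (S : NN l → Finset (MM l)) (hS : IsAllocation S) :
    welfare v S ≤ (l:ℝ)^2 := by
  have hval : ∀ i, v i (S i) = if own i ⊆ S i then (l:ℝ) else 0 := fun i => v_apply hv i _
  have hconflict : ∀ (a c : Fin l), own (Sum.inl a : NN l) ⊆ S (Sum.inl a) →
      own (Sum.inr c : NN l) ⊆ S (Sum.inr c) → False := by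
    intro a c h1 h2
    have q1 : ((a, c) : MM l) ∈ S (Sum.inl a) := h1 (by simp [own])
    have q2 : ((a, c) : MM l) ∈ S (Sum.inr c) := h2 (by simp [own])
    rcases hS ((a, c) : MM l) with ⟨w, _, hw⟩
    have e1 := hw _ q1
    have e2 := hw _ q2
    rw [← e2] at e1
    exact Sum.inl_ne_inr e1
  rw [welfare, Fintype.sum_sum_type]
  by_cases hrow : ∃ a : Fin l, own (Sum.inl a : NN l) ⊆ S (Sum.inl a)
  · rcases hrow with ⟨a0, ha0⟩
    have hc : ∀ c : Fin l, v (Sum.inr c) (S (Sum.inr c)) = 0 := by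
      intro c; rw [hval]; rw [if_neg (fun h => hconflict a0 c ha0 h)]
    have hsum2 : ∑ c : Fin l, v (Sum.inr c) (S (Sum.inr c)) = 0 := by simp [hc]
    have hsum1 : ∑ a : Fin l, v (Sum.inl a) (S (Sum.inl a)) ≤ (l:ℝ) * l := by
      calc ∑ a : Fin l, v (Sum.inl a) (S (Sum.inl a)) ≤ ∑ _a : Fin l, (l:ℝ) :=
            Finset.sum_le_sum (fun a _ => v_le hv _ _)
        _ = (l:ℝ) * l := by simp [mul_comm]
    rw [hsum2]; rw [sq]; linarith
  · push_neg at hrow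
    have hsum1 : ∑ a : Fin l, v (Sum.inl a) (S (Sum.inl a)) = 0 := by
      apply Finset.sum_eq_zero; intro a _
      rw [hval, if_neg (hrow a)]
    have hsum2 : ∑ c : Fin l, v (Sum.inr c) (S (Sum.inr c)) ≤ (l:ℝ) * l := by
      calc ∑ c : Fin l, v (Sum.inr c) (S (Sum.inr c)) ≤ ∑ _c : Fin l, (l:ℝ) :=
            Finset.sum_le_sum (fun c _ => v_le hv _ _)
        _ = (l:ℝ) * l := by simp [mul_comm]
    rw [hsum1]; rw [sq]; linarith

omit [NeZero l] hv in
lemma isAllocation_opt : IsAllocation (fun i : NN l =>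
    Sum.elim (fun a => own (Sum.inl a : NN l)) (fun _ => (∅ : Finset (MM l))) i) := by
  intro q
  refine ⟨Sum.inl q.1, by simp [own], ?_⟩
  intro k hk
  cases k with
  | inl a => simp [own] at hk; simp [hk]
  | inr c => simp at hk

end PartAMain
open Classical in
/-- classical indicator -/
noncomputable def indi (P : Prop) (c : ℝ) : ℝ := if P then c else 0

lemma indi_of_true {P : Prop} (h : P) (c : ℝ) : indi P c = c := by
  rw [indi, if_pos h]

lemma indi_of_false {P : Prop} (h : ¬ P) (c : ℝ) : indi P c = 0 := by
  rw [indi, if_neg h]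

lemma indi_congr {P Q : Prop} (h : P ↔ Q) (c : ℝ) : indi P c = indi Q c := by
  by_cases hP : P
  · rw [indi_of_true hP, indi_of_true (h.1 hP)]
  · rw [indi_of_false hP, indi_of_false (fun hq => hP (h.2 hq))]

lemma indi_nonneg {P : Prop} {c : ℝ} (hc : 0 ≤ c) : 0 ≤ indi P c := by
  by_cases hP : P
  · rwa [indi_of_true hP]
  · rw [indi_of_false hP]

lemma indi_le {P : Prop} {c : ℝ} (hc : 0 ≤ c) : indi P c ≤ c := by
  by_cases hP : P
  · rw [indi_of_true hP]
  · rw [indi_of_false hP]; exact hc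

lemma abs_indi_le {P : Prop} {c d : ℝ} (h : |c| ≤ d) : |indi P c| ≤ d := by
  by_cases hP : P
  · rwa [indi_of_true hP]
  · rw [indi_of_false hP, abs_zero]
    exact le_trans (abs_nonneg c) h

lemma indi_mono {P Q : Prop} {c : ℝ} (hPQ : P → Q) (hc : 0 ≤ c) : indi P c ≤ indi Q c := by
  by_cases hP : P
  · rw [indi_of_true hP, indi_of_true (hPQ hP)]
  · rw [indi_of_false hP]; exact indi_nonneg hc

lemma indi_eq_indicator {α : Type*} (P : α → Prop) (c : ℝ) :
    (fun y => indi (P y) c) = Set.indicator {y | P y} (fun _ => c) := by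
  funext y
  by_cases h : P y
  · rw [indi_of_true h, Set.indicator_of_mem (by exact h)]
  · rw [indi_of_false h, Set.indicator_of_notMem (by exact h)]

lemma measurable_indi {α : Type*} [MeasurableSpace α] {P : α → Prop} {c : α → ℝ}
    (hP : MeasurableSet {y | P y}) (hc : Measurable c) :
    Measurable (fun y => indi (P y) (c y)) := by
  have : (fun y => indi (P y) (c y)) = fun y =>
      @ite _ (P y) (Classical.propDecidable (P y)) (c y) 0 := by
    funext y; rw [indi]
  rw [this]
  exact Measurable.ite hP hc measurable_const


/-! ### The continuous measure and generic product-measure lemmas -/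

noncomputable def nu : Measure ℝ := volume.restrict (Set.Icc 0 1)

instance : IsProbabilityMeasure nu :=
  ⟨by rw [nu, Measure.restrict_apply_univ, Real.volume_Icc]; norm_num⟩

instance : NullSingletonClass nu := by rw [nu]; infer_instance

lemma nu_apply (A : Set ℝ) : nu A = volume (A ∩ Set.Icc 0 1) :=
  Measure.restrict_apply' measurableSet_Icc

lemma nu_compl_Icc : nu (Set.Icc (0:ℝ) 1)ᶜ = 0 := by
  rw [nu_apply, Set.compl_inter_self]; simp

lemma nu_compl_Ioc : nu (Set.Ioc (0:ℝ) 1)ᶜ = 0 := by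
  rw [nu_apply]
  have : (Set.Ioc (0:ℝ) 1)ᶜ ∩ Set.Icc 0 1 ⊆ {0} := by
    rintro x ⟨hx1, hx2⟩
    simp only [Set.mem_compl_iff, Set.mem_Ioc, not_and_or, not_lt, not_le] at hx1
    rcases hx1 with h | h
    · simp [le_antisymm h hx2.1]
    · exact absurd hx2.2 (by linarith)
  exact measure_mono_null this (by simp)

/-- Pushforward of a product of copies of `μ` along coordinatewise maps. -/
lemma pi_map {ι : Type*} [Fintype ι] {β : ι → Type*} [∀ i, MeasurableSpace (β i)]
    (μ : Measure ℝ) [IsProbabilityMeasure μ] (f : ∀ i, ℝ → β i) (hf : ∀ i, Measurable (f i)) :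
    Measure.pi (fun i => μ.map (f i)) = (Measure.pi fun _ : ι => μ).map (fun y i => f i (y i)) := by
  haveI : ∀ i, IsProbabilityMeasure (μ.map (f i)) :=
    fun i => Measure.isProbabilityMeasure_map (hf i).aemeasurable
  have hmeas : Measurable (fun (y : ι → ℝ) i => f i (y i)) :=
    measurable_pi_lambda _ (fun i => (hf i).comp (measurable_pi_apply i))
  refine Measure.pi_eq (fun s hs => ?_)
  rw [Measure.map_apply hmeas (MeasurableSet.univ_pi hs)]
  have hpre : (fun (y : ι → ℝ) i => f i (y i)) ⁻¹' (Set.univ.pi s)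
      = Set.univ.pi (fun i => f i ⁻¹' s i) := by
    ext y; simp [Set.mem_pi]
  rw [hpre, Measure.pi_pi]
  exact Finset.prod_congr rfl (fun i _ => (Measure.map_apply (hf i) (hs i)).symm)

/-- the marginal of a product of copies of a probability measure. -/
lemma map_eval_pi {ι : Type*} [Fintype ι] [DecidableEq ι] (μ : Measure ℝ) [IsProbabilityMeasure μ] (a : ι) :
    (Measure.pi fun _ : ι => μ).map (fun x => x a) = μ := by
  refine Measure.ext (fun A hA => ?_)
  rw [Measure.map_apply (measurable_pi_apply a) hA]
  have hpre : (fun x : ι → ℝ => x a) ⁻¹' A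
      = Set.univ.pi (Function.update (fun _ => Set.univ) a A) := by
    ext y
    simp only [Set.mem_preimage, Set.mem_pi, Set.mem_univ, true_implies]
    constructor
    · intro h i
      rcases eq_or_ne i a with rfl | hne
      · simpa using h
      · simp [Function.update_of_ne hne]
    · intro h; simpa using h a
  rw [hpre, Measure.pi_pi]
  rw [Finset.prod_eq_single a (fun b _ hb => by simp [Function.update_of_ne hb])
    (fun h => absurd (Finset.mem_univ a) h)]
  simp

lemma integral_eval_pi {ι : Type*} [Fintype ι] [DecidableEq ι] (μ : Measure ℝ)
    [IsProbabilityMeasure μ] (a : ι)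
    {h : ℝ → ℝ} (hh : AEStronglyMeasurable h μ) :
    ∫ x, h (x a) ∂(Measure.pi fun _ : ι => μ) = ∫ u, h u ∂μ := by
  have hm : AEStronglyMeasurable h ((Measure.pi fun _ : ι => μ).map (fun x => x a)) := by
    rw [map_eval_pi]; exact hh
  rw [show (∫ x, h (x a) ∂(Measure.pi fun _ : ι => μ))
      = ∫ u, h u ∂((Measure.pi fun _ : ι => μ).map (fun x => x a)) from
    (integral_map (measurable_pi_apply a).aemeasurable hm).symm, map_eval_pi]

/-- integration of the classical indicator of a measurable set -/
lemma integral_indi {α : Type*} [MeasurableSpace α] (μ : Measure α) (P : α → Prop)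
    (hP : MeasurableSet {y | P y}) (c : ℝ) :
    ∫ y, indi (P y) c ∂μ = (μ {y | P y}).toReal * c := by
  rw [indi_eq_indicator, integral_indicator_const c hP, smul_eq_mul]; rfl

lemma integrable_indi {α : Type*} [MeasurableSpace α] (μ : Measure α) [IsFiniteMeasure μ]
    (P : α → Prop) (hP : MeasurableSet {y | P y}) (c : ℝ) :
    Integrable (fun y => indi (P y) c) μ := by
  rw [indi_eq_indicator]
  exact (integrable_const c).indicator hP

/-- integral of a box indicator over a product measure -/
lemma integral_box {ι : Type*} [Fintype ι] (μ : Measure ℝ) [IsProbabilityMeasure μ]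
    (A : ι → Set ℝ) (hA : ∀ i, MeasurableSet (A i)) (c : ℝ) :
    ∫ y, indi (∀ j, y j ∈ A j) c ∂(Measure.pi fun _ : ι => μ)
      = (∏ j, (μ (A j)).toReal) * c := by
  have hset : {y : ι → ℝ | ∀ j, y j ∈ A j} = Set.univ.pi A := by
    ext y; simp [Set.mem_pi]
  rw [integral_indi _ _ (by rw [hset]; exact MeasurableSet.univ_pi hA) c]
  rw [hset, Measure.pi_pi, ENNReal.toReal_prod]

lemma integral_cyl {ι : Type*} [Fintype ι] [DecidableEq ι] (μ : Measure ℝ)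
    [IsProbabilityMeasure μ] (a : ι) (A : Set ℝ) (hA : MeasurableSet A) (c : ℝ) :
    ∫ y, indi (y a ∈ A) c ∂(Measure.pi fun _ : ι => μ)
      = (μ A).toReal * c := by
  have hset : {y : ι → ℝ | y a ∈ A} = Set.univ.pi (Function.update (fun _ => Set.univ) a A) := by
    ext y
    simp only [Set.mem_setOf_eq, Set.mem_pi, Set.mem_univ, true_implies]
    constructor
    · intro h i
      rcases eq_or_ne i a with rfl | hne
      · simpa using h
      · simp [Function.update_of_ne hne]
    · intro h; simpa using h a
  have hAmeas : ∀ i, MeasurableSet (Function.update (fun _ : ι => (Set.univ : Set ℝ)) a A i) := by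
    intro i
    rcases eq_or_ne i a with rfl | hne
    · simpa using hA
    · simp [Function.update_of_ne hne]
  rw [integral_indi _ _ (by rw [hset]; exact MeasurableSet.univ_pi hAmeas) c]
  rw [hset, Measure.pi_pi]
  rw [Finset.prod_eq_single a (fun b _ hb => by simp [Function.update_of_ne hb])
    (fun h => absurd (Finset.mem_univ a) h)]
  simp


section Split
variable {l : ℕ}

noncomputable def QQ (l : ℕ) : Measure (Fin l → ℝ) := Measure.pi fun _ => nu
noncomputable def P0 (l : ℕ) : Measure (NN l → ℝ) := Measure.pi fun _ => nu

instance : IsProbabilityMeasure (QQ l) := by rw [QQ]; infer_instance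
instance : IsProbabilityMeasure (P0 l) := by rw [P0]; infer_instance

/-- split of the 2l-fold product into rows and columns blocks -/
lemma integral_P0_split (F : (NN l → ℝ) → ℝ) :
    ∫ y, F y ∂(P0 l)
      = ∫ z : (Fin l → ℝ) × (Fin l → ℝ), F (Sum.rec z.1 z.2) ∂((QQ l).prod (QQ l)) := by
  have h := (measurePreserving_sumPiEquivProdPi_symm
    (fun _ : NN l => nu)).integral_comp
    (MeasurableEquiv.sumPiEquivProdPi (fun _ : NN l => ℝ)).symm.measurableEmbedding F
  exact h.symm

lemma diag_null (a b : Fin l) :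
    P0 l {y : NN l → ℝ | y (Sum.inl a) = y (Sum.inr b)} = 0 := by
  have hmp := (measurePreserving_sumPiEquivProdPi_symm (fun _ : NN l => nu)).map_eq
  have hms : MeasurableSet {y : NN l → ℝ | y (Sum.inl a) = y (Sum.inr b)} :=
    measurableSet_eq_fun (measurable_pi_apply _) (measurable_pi_apply _)
  rw [P0, ← hmp, Measure.map_apply
    (MeasurableEquiv.sumPiEquivProdPi (fun _ : NN l => ℝ)).symm.measurable hms]
  have hpre : ((MeasurableEquiv.sumPiEquivProdPi (fun _ : NN l => ℝ)).symm) ⁻¹'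
      {y : NN l → ℝ | y (Sum.inl a) = y (Sum.inr b)}
      = {z : (Fin l → ℝ) × (Fin l → ℝ) | z.1 a = z.2 b} := rfl
  rw [hpre]
  have hms2 : MeasurableSet {z : (Fin l → ℝ) × (Fin l → ℝ) | z.1 a = z.2 b} :=
    measurableSet_eq_fun (by fun_prop) (by fun_prop)
  rw [show (Measure.pi fun _ : Fin l => nu) = QQ l from rfl]
  rw [Measure.prod_apply hms2]
  have : ∀ x : Fin l → ℝ, (QQ l) (Prod.mk x ⁻¹' {z : (Fin l → ℝ) × (Fin l → ℝ) | z.1 a = z.2 b})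
      = 0 := by
    intro x
    have : (Prod.mk x ⁻¹' {z : (Fin l → ℝ) × (Fin l → ℝ) | z.1 a = z.2 b})
        = Function.eval b ⁻¹' ({x a} : Set ℝ) := by
      ext s; simp [eq_comm, Function.eval]
    rw [this, QQ]
    exact Measure.pi_eval_preimage_null _ (measure_singleton _)
  simp only [this, lintegral_zero]

end Split

/-! ### the bid distribution function and its properties -/

noncomputable def gpow (l : ℕ) : ℝ → ℝ := fun u => u ^ (l - 1)

lemma gpow_meas {l : ℕ} : Measurable (gpow l) := by
  unfold gpow; exact measurable_id.pow_const _

/-- `F` is the cdf of the bids: measure of `{w | gpow l w < x}` -/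
noncomputable def Fcdf (l : ℕ) (x : ℝ) : ℝ := (nu {w | gpow l w < x}).toReal

noncomputable def Fcdf' (l : ℕ) (x : ℝ) : ℝ := (nu {w | gpow l w ≤ x}).toReal

lemma Fcdf_nonneg (l : ℕ) (x : ℝ) : 0 ≤ Fcdf l x := ENNReal.toReal_nonneg

lemma Fcdf'_le_one (l : ℕ) (x : ℝ) : Fcdf' l x ≤ 1 := by
  rw [Fcdf']
  have h : nu {w | gpow l w ≤ x} ≤ 1 := by
    rw [← measure_univ (μ := nu)]; exact measure_mono (Set.subset_univ _)
  exact le_trans (ENNReal.toReal_mono ENNReal.one_ne_top h) (by norm_num)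

lemma Fcdf'_eq (l : ℕ) (hl : 2 ≤ l) (x : ℝ) : Fcdf' l x = Fcdf l x := by
  have hsub : {w | gpow l w ≤ x} ⊆ {w | gpow l w < x} ∪ {w | gpow l w = x} := by
    intro w hw
    have hw' : gpow l w ≤ x := hw
    rcases lt_or_eq_of_le hw' with h | h
    · exact Or.inl h
    · exact Or.inr h
  have hnull : nu {w | gpow l w = x} = 0 := by
    rw [nu_apply]
    apply Set.Countable.measure_zero
    apply Set.Subsingleton.countable
    intro w1 hw1 w2 hw2
    have h1 : w1 ^ (l-1) = x := hw1.1
    have h2 : w2 ^ (l-1) = x := hw2.1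
    have := h1.trans h2.symm
    exact (pow_left_strictMonoOn₀ (n := l-1) (by omega)).injOn hw1.2.1 hw2.2.1
      (this : w1 ^ (l-1) = w2 ^ (l-1))
  have h1 : nu {w | gpow l w ≤ x} ≤ nu {w | gpow l w < x} := by
    calc nu {w | gpow l w ≤ x} ≤ nu ({w | gpow l w < x} ∪ {w | gpow l w = x}) :=
          measure_mono hsub
      _ ≤ nu {w | gpow l w < x} + nu {w | gpow l w = x} := measure_union_le _ _
      _ = nu {w | gpow l w < x} := by rw [hnull, add_zero]
  have h2 : nu {w | gpow l w < x} ≤ nu {w | gpow l w ≤ x} :=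
    measure_mono (fun w hw => (le_of_lt (hw : gpow l w < x) : gpow l w ≤ x))
  rw [Fcdf', Fcdf, le_antisymm h1 h2]

lemma Fcdf_pow_le (l : ℕ) (hl : 2 ≤ l) {x : ℝ} (hx : 0 ≤ x) :
    Fcdf l x ^ (l - 1) ≤ x := by
  set r : ℝ := x ^ (((l - 1 : ℕ) : ℝ))⁻¹ with hr
  have hrn : 0 ≤ r := Real.rpow_nonneg hx _
  have hrp : r ^ (l - 1) = x := Real.rpow_inv_natCast_pow hx (by omega)
  have hsub : {w | gpow l w < x} ∩ Set.Icc 0 1 ⊆ Set.Icc 0 r := by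
    rintro w ⟨hw1, hw2⟩
    refine ⟨hw2.1, ?_⟩
    have : w ^ (l-1) < r ^ (l-1) := by rw [hrp]; exact hw1
    exact le_of_lt ((pow_lt_pow_iff_left₀ hw2.1 hrn (by omega)).1 this)
  have hle : nu {w | gpow l w < x} ≤ ENNReal.ofReal r := by
    rw [nu_apply]
    calc volume ({w | gpow l w < x} ∩ Set.Icc 0 1) ≤ volume (Set.Icc 0 r) :=
          measure_mono hsub
      _ = ENNReal.ofReal r := by rw [Real.volume_Icc, sub_zero]
  have hc : Fcdf l x ≤ r := by
    rw [Fcdf]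
    calc (nu {w | gpow l w < x}).toReal ≤ (ENNReal.ofReal r).toReal :=
          ENNReal.toReal_mono ENNReal.ofReal_ne_top hle
      _ = r := ENNReal.toReal_ofReal hrn
  calc Fcdf l x ^ (l-1) ≤ r ^ (l-1) := pow_le_pow_left₀ (Fcdf_nonneg l x) hc _
    _ = x := hrp

lemma Fcdf_pow_le' (l : ℕ) (hl : 2 ≤ l) {x : ℝ} (hx : 0 ≤ x) :
    Fcdf l x ^ l ≤ x * Fcdf l x := by
  have h : Fcdf l x ^ l = Fcdf l x ^ (l-1) * Fcdf l x := by
    rw [← pow_succ]; congr 1; omega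
  rw [h]
  exact mul_le_mul_of_nonneg_right (Fcdf_pow_le l hl hx) (Fcdf_nonneg l x)

/-- AM-GM for our purpose -/
lemma amgm {l : ℕ} (hl : 2 ≤ l) (c : Fin l → ℝ) (hc : ∀ j, 0 ≤ c j) :
    (l : ℝ) * ∏ j, c j ≤ ∑ j, c j ^ l := by
  have hl0 : (0:ℝ) < l := by positivity
  have hw : ∑ _j : Fin l, (1 : ℝ)/l = 1 := by
    rw [Finset.sum_const]; simp; field_simp
  have h := Real.geom_mean_le_arith_mean_weighted Finset.univ (fun _ => (1:ℝ)/l)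
    (fun j => c j ^ l) (fun i _ => by positivity) hw (fun i _ => pow_nonneg (hc i) l)
  have hre : ∀ j : Fin l, (c j ^ l) ^ ((1:ℝ)/l) = c j := by
    intro j
    rw [← Real.rpow_natCast (c j) l, ← Real.rpow_mul (hc j)]
    rw [mul_one_div, div_self (ne_of_gt hl0), Real.rpow_one]
  rw [Finset.prod_congr rfl (fun j _ => hre j)] at h
  have h2 : ∑ j, (1:ℝ)/l * c j ^ l = (1/l) * ∑ j, c j ^ l := by
    rw [Finset.mul_sum]
  rw [h2] at h
  calc (l:ℝ) * ∏ j, c j ≤ (l:ℝ) * ((1/l) * ∑ j, c j ^ l) :=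
        mul_le_mul_of_nonneg_left h (le_of_lt hl0)
    _ = ∑ j, c j ^ l := by field_simp

/-- the key deviation-bound inequality -/
lemma dev_ineq {l : ℕ} (hl : 2 ≤ l) (x : Fin l → ℝ) (hx : ∀ j, 0 ≤ x j) :
    (l : ℝ) * ∏ j, Fcdf' l (x j) ≤ ∑ j, x j * Fcdf l (x j) := by
  calc (l : ℝ) * ∏ j, Fcdf' l (x j) = (l:ℝ) * ∏ j, Fcdf l (x j) := by
        rw [Finset.prod_congr rfl (fun j _ => Fcdf'_eq l hl (x j))]
    _ ≤ ∑ j, Fcdf l (x j) ^ l := amgm hl _ (fun j => Fcdf_nonneg l _)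
    _ ≤ ∑ j, x j * Fcdf l (x j) :=
        Finset.sum_le_sum (fun j _ => Fcdf_pow_le' l hl (hx j))


section PartB3
variable {l : ℕ}

/-! ### the equilibrium mixed strategies -/

noncomputable def phi (l : ℕ) (i : NN l) : ℝ → (MM l → ℝ) :=
  fun u q => if q ∈ own i then gpow l u else 0

lemma phi_meas (i : NN l) : Measurable (phi l i) := by
  apply measurable_pi_lambda
  intro q
  by_cases h : q ∈ own i <;> simp only [phi, h, if_true, if_false]
  · exact gpow_meas
  · exact measurable_const

noncomputable def sigmaEq (l : ℕ) : NN l → Measure (MM l → ℝ) := fun i => nu.map (phi l i)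

noncomputable def Phi (l : ℕ) : (NN l → ℝ) → (NN l → MM l → ℝ) := fun y i => phi l i (y i)

lemma Phi_meas : Measurable (Phi l) :=
  measurable_pi_lambda _ (fun i => (phi_meas i).comp (measurable_pi_apply i))

instance (i : NN l) : IsProbabilityMeasure (sigmaEq l i) :=
  Measure.isProbabilityMeasure_map (phi_meas i).aemeasurable

lemma pi_sigmaEq : Measure.pi (sigmaEq l) = (P0 l).map (Phi l) :=
  pi_map nu (phi l) phi_meas

lemma meas_eval2 (k : NN l) (q : MM l) : Measurable fun b : NN l → MM l → ℝ => b k q :=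
  (measurable_pi_apply q).comp (measurable_pi_apply k)

/-! ### the good event -/

def Gset (l : ℕ) : Set (NN l → MM l → ℝ) :=
  {b | ∀ i : NN l, (∀ q, q ∉ own i → b i q = 0) ∧ (∀ q ∈ own i, 0 < b i q) ∧
        (∀ j : Fin l, b i (itm i j) ≠ b (oppo i j) (itm i j))}

lemma Gset_meas : MeasurableSet (Gset l) := by
  have : Gset l = ⋂ i : NN l,
      ((⋂ q : MM l, {b : NN l → MM l → ℝ | q ∉ own i → b i q = 0}) ∩
       ((⋂ q : MM l, {b : NN l → MM l → ℝ | q ∈ own i → 0 < b i q}) ∩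
        (⋂ j : Fin l, {b : NN l → MM l → ℝ | b i (itm i j) ≠ b (oppo i j) (itm i j)}))) := by
    ext b
    simp only [Gset, Set.mem_setOf_eq, Set.mem_iInter, Set.mem_inter_iff]
  rw [this]
  refine MeasurableSet.iInter (fun i => ?_)
  refine MeasurableSet.inter ?_ (MeasurableSet.inter ?_ ?_)
  · refine MeasurableSet.iInter (fun q => ?_)
    by_cases h : q ∈ own i
    · simp only [h, not_true_eq_false, false_implies]
      exact MeasurableSet.univ
    · simp only [h, not_false_eq_true, true_implies]
      exact measurableSet_eq_fun (meas_eval2 i q) measurable_const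
  · refine MeasurableSet.iInter (fun q => ?_)
    by_cases h : q ∈ own i
    · simp only [h, true_implies]
      exact measurableSet_lt measurable_const (meas_eval2 i q)
    · simp only [h, false_implies]
      exact MeasurableSet.univ
  · refine MeasurableSet.iInter (fun j => ?_)
    exact (measurableSet_eq_fun (meas_eval2 i (itm i j))
      (meas_eval2 (oppo i j) (itm i j))).compl

/-- on the good event the allocation is completely determined -/
lemma alloc_mem_iff (T : TieRule (NN l) (MM l)) {b : NN l → MM l → ℝ} (hb : b ∈ Gset l)
    (i : NN l) (q : MM l) :
    q ∈ T.alloc b i ↔ q ∈ own i ∧ b (oppo i (idx i q)) q < b i q := by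
  constructor
  · intro hq
    have hqown : q ∈ own i := by
      by_contra hno
      have h0 : b i q = 0 := (hb i).1 q hno
      have hpos : 0 < b (Sum.inl q.1) q :=
        (hb (Sum.inl q.1)).2.1 q (mem_own_iff.2 (Or.inl rfl))
      have := T.highest b i q hq (Sum.inl q.1)
      rw [h0] at this; linarith
    refine ⟨hqown, ?_⟩
    have hne := (hb i).2.2 (idx i q)
    rw [itm_idx hqown] at hne
    have hle := T.highest b i q hq (oppo i (idx i q))
    exact hle.lt_of_ne (fun h => hne h.symm)
  · rintro ⟨hqown, hlt⟩
    obtain ⟨w, hw, _⟩ := T.partition b q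
    have hiw : w = i := by
      by_contra hne
      have hle := T.highest b w q hw i
      have hpos : 0 < b i q := (hb i).2.1 q hqown
      have hwown : q ∈ own w := by
        by_contra hno
        have := (hb w).1 q hno
        linarith
      have hcase := own_itm_cases (i := i) (j := idx i q) (k := w)
        (by rw [itm_idx hqown]; exact hwown)
      rcases hcase with h | h
      · exact hne h
      · rw [h] at hle; linarith
    rw [← hiw]; exact hw

open Classical in
lemma alloc_eq (T : TieRule (NN l) (MM l)) {b : NN l → MM l → ℝ} (hb : b ∈ Gset l) (i : NN l) :
    T.alloc b i = (own i).filter (fun q => b (oppo i (idx i q)) q < b i q) := by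
  ext q; rw [alloc_mem_iff T hb i q, Finset.mem_filter]

/-- explicit utility on the good event -/
noncomputable def ustar (l : ℕ) (b : NN l → MM l → ℝ) (i : NN l) : ℝ :=
  indi (∀ j : Fin l, b (oppo i j) (itm i j) < b i (itm i j)) (l:ℝ)
    - ∑ j : Fin l, indi (b (oppo i j) (itm i j) < b i (itm i j)) (b i (itm i j))

noncomputable def Wstar (l : ℕ) (b : NN l → MM l → ℝ) : ℝ :=
  ∑ i : NN l, indi (∀ j : Fin l, b (oppo i j) (itm i j) < b i (itm i j)) (l:ℝ)

lemma measSet_all_lt (i : NN l) : MeasurableSet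
    {b : NN l → MM l → ℝ | ∀ j : Fin l, b (oppo i j) (itm i j) < b i (itm i j)} := by
  have : {b : NN l → MM l → ℝ | ∀ j : Fin l, b (oppo i j) (itm i j) < b i (itm i j)}
      = ⋂ j : Fin l, {b : NN l → MM l → ℝ | b (oppo i j) (itm i j) < b i (itm i j)} := by
    ext b; simp
  rw [this]
  exact MeasurableSet.iInter (fun j =>
    measurableSet_lt (meas_eval2 (oppo i j) (itm i j)) (meas_eval2 i (itm i j)))

lemma ustar_meas (i : NN l) : Measurable (fun b => ustar l b i) := by
  apply Measurable.sub
  · exact measurable_indi (measSet_all_lt i) measurable_const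
  · apply Finset.measurable_sum
    intro j _
    exact measurable_indi
      (measurableSet_lt (meas_eval2 (oppo i j) (itm i j)) (meas_eval2 i (itm i j)))
      (meas_eval2 i (itm i j))

lemma Wstar_meas : Measurable (Wstar l) := by
  apply Finset.measurable_sum
  intro i _
  exact measurable_indi (measSet_all_lt i) measurable_const

section WithV
variable {v : NN l → Finset (MM l) → ℝ} (hv : ∀ i, v i = singleMinded (own i) (l : ℝ))
include hv

lemma subset_filter_iff (i : NN l) (P : MM l → Prop) [DecidablePred P] :
    own i ⊆ (own i).filter P ↔ ∀ j : Fin l, P (itm i j) := by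
  constructor
  · intro h j
    exact (Finset.mem_filter.1 (h (itm_mem_own i j))).2
  · intro h q hq
    refine Finset.mem_filter.2 ⟨hq, ?_⟩
    have := h (idx i q)
    rwa [itm_idx hq] at this

open Classical in
lemma value_on_G (T : TieRule (NN l) (MM l)) {b : NN l → MM l → ℝ} (hb : b ∈ Gset l) (i : NN l) :
    v i (T.alloc b i)
      = indi (∀ j : Fin l, b (oppo i j) (itm i j) < b i (itm i j)) (l:ℝ) := by
  rw [v_apply hv, alloc_eq T hb i]
  have hiff : own i ⊆ (own i).filter (fun q => b (oppo i (idx i q)) q < b i q)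
      ↔ ∀ j : Fin l, b (oppo i j) (itm i j) < b i (itm i j) := by
    rw [subset_filter_iff hv]
    constructor
    · intro h j
      have := h j; rwa [idx_itm] at this
    · intro h j
      rw [idx_itm]; exact h j
  by_cases h : ∀ j : Fin l, b (oppo i j) (itm i j) < b i (itm i j)
  · rw [if_pos (hiff.2 h), indi_of_true h]
  · rw [if_neg (fun hs => h (hiff.1 hs)), indi_of_false h]

open Classical in
lemma utility_on_G (T : TieRule (NN l) (MM l)) {b : NN l → MM l → ℝ} (hb : b ∈ Gset l)
    (i : NN l) : utility v T b i = ustar l b i := by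
  rw [utility, ustar, value_on_G hv T hb i]
  congr 1
  rw [alloc_eq T hb i, Finset.sum_filter, sum_own]
  refine Finset.sum_congr rfl (fun j _ => ?_)
  rw [idx_itm]
  by_cases h : b (oppo i j) (itm i j) < b i (itm i j)
  · rw [if_pos h, indi_of_true h]
  · rw [if_neg h, indi_of_false h]

open Classical in
lemma welfare_on_G (T : TieRule (NN l) (MM l)) {b : NN l → MM l → ℝ} (hb : b ∈ Gset l) :
    welfare v (T.alloc b) = Wstar l b := by
  rw [welfare, Wstar]
  exact Finset.sum_congr rfl (fun i _ => value_on_G hv T hb i)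

end WithV

/-! ### the bad event is null -/

lemma Phi_mem_Gset {y : NN l → ℝ} (hl : 2 ≤ l)
    (h1 : ∀ k, y k ∈ Set.Ioc (0:ℝ) 1)
    (h2 : ∀ a b : Fin l, y (Sum.inl a) ≠ y (Sum.inr b)) :
    Phi l y ∈ Gset l := by
  intro i
  refine ⟨fun q hq => by simp [Phi, phi, hq], fun q hq => ?_, fun j => ?_⟩
  · simp only [Phi, phi, hq, if_true]
    exact pow_pos (h1 i).1 _
  · simp only [Phi, phi, itm_mem_own i j, itm_mem_own_oppo i j, if_true]
    have hne : y i ≠ y (oppo i j) := by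
      cases i with
      | inl a => exact h2 a j
      | inr c => exact fun h => h2 j c h.symm
    intro hcon
    apply hne
    exact (pow_left_strictMonoOn₀ (n := l-1) (by omega)).injOn
      (le_of_lt (h1 i).1) (le_of_lt (h1 (oppo i j)).1) hcon

lemma bad_null (hl : 2 ≤ l) :
    P0 l {y : NN l → ℝ | ¬ ((∀ k, y k ∈ Set.Ioc (0:ℝ) 1)
      ∧ ∀ a b : Fin l, y (Sum.inl a) ≠ y (Sum.inr b))} = 0 := by
  apply measure_mono_null (t :=
    (⋃ k : NN l, {y : NN l → ℝ | y k ∉ Set.Ioc (0:ℝ) 1}) ∪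
    (⋃ a : Fin l, ⋃ b : Fin l, {y : NN l → ℝ | y (Sum.inl a) = y (Sum.inr b)}))
  · intro y hy
    simp only [Set.mem_setOf_eq, not_and_or] at hy
    rcases hy with h | h
    · left; push_neg at h
      rcases h with ⟨k, hk⟩
      exact Set.mem_iUnion.2 ⟨k, hk⟩
    · right; push_neg at h
      rcases h with ⟨a, b, hab⟩
      exact Set.mem_iUnion.2 ⟨a, Set.mem_iUnion.2 ⟨b, hab⟩⟩
  · apply measure_union_null
    · apply measure_iUnion_null
      intro k
      exact Measure.pi_eval_preimage_null (fun _ : NN l => nu) (i := k)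
        (s := (Set.Ioc (0:ℝ) 1)ᶜ) nu_compl_Ioc
    · apply measure_iUnion_null
      intro a
      apply measure_iUnion_null
      intro b
      exact diag_null a b

lemma Phi_preimage_Gset_compl_null (hl : 2 ≤ l) : P0 l (Phi l ⁻¹' (Gset l)ᶜ) = 0 := by
  apply measure_mono_null (t :=
    {y : NN l → ℝ | ¬ ((∀ k, y k ∈ Set.Ioc (0:ℝ) 1)
      ∧ ∀ a b : Fin l, y (Sum.inl a) ≠ y (Sum.inr b))})
  · intro y hy
    simp only [Set.mem_preimage, Set.mem_compl_iff] at hy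
    by_contra h
    simp only [Set.mem_setOf_eq, not_not] at h
    exact hy (Phi_mem_Gset hl h.1 h.2)
  · exact bad_null hl

end PartB3

section PartB4
variable {l : ℕ}

lemma QQ_def : QQ l = Measure.pi fun _ : Fin l => nu := rfl
lemma P0_def : P0 l = Measure.pi fun _ : NN l => nu := rfl

lemma ae_fst_prod {α β : Type*} [MeasurableSpace α] [MeasurableSpace β]
    {μ : Measure α} {ν : Measure β} [SFinite μ] [SFinite ν] {p : α → Prop}
    (h : ∀ᵐ x ∂μ, p x) : ∀ᵐ z ∂(μ.prod ν), p z.1 := by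
  rw [ae_iff] at h ⊢
  have hset : {z : α × β | ¬ p z.1} = {x | ¬ p x} ×ˢ Set.univ := by ext z; simp
  rw [hset, Measure.prod_prod, h, zero_mul]

lemma QQ_icc_ae : ∀ᵐ x ∂(QQ l), ∀ j, x j ∈ Set.Icc (0:ℝ) 1 := by
  rw [ae_all_iff]
  intro j
  rw [ae_iff, QQ_def]
  exact Measure.pi_eval_preimage_null (fun _ : Fin l => nu) (i := j)
    (s := (Set.Icc (0:ℝ) 1)ᶜ) nu_compl_Icc

lemma P0_icc_ae : ∀ᵐ y ∂(P0 l), ∀ k, y k ∈ Set.Icc (0:ℝ) 1 := by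
  rw [ae_all_iff]
  intro k
  rw [ae_iff, P0_def]
  exact Measure.pi_eval_preimage_null (fun _ : NN l => nu) (i := k)
    (s := (Set.Icc (0:ℝ) 1)ᶜ) nu_compl_Icc

lemma Fcdf_gpow (hl : 2 ≤ l) {u : ℝ} (hu : u ∈ Set.Icc (0:ℝ) 1) :
    Fcdf l (gpow l u) = u := by
  rw [Fcdf, nu_apply]
  have hset : {w | gpow l w < gpow l u} ∩ Set.Icc 0 1 = Set.Ico 0 u := by
    ext w
    constructor
    · rintro ⟨hw1, hw2⟩
      exact ⟨hw2.1, (pow_lt_pow_iff_left₀ hw2.1 hu.1 (by omega : l - 1 ≠ 0)).1 hw1⟩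
    · rintro ⟨hw0, hwu⟩
      exact ⟨(pow_lt_pow_iff_left₀ hw0 hu.1 (by omega : l - 1 ≠ 0)).2 hwu,
        hw0, le_trans (le_of_lt hwu) hu.2⟩
  rw [hset, Real.volume_Ico, sub_zero, ENNReal.toReal_ofReal hu.1]

lemma Fcdf_mono : Monotone (Fcdf l) := by
  intro x y hxy
  exact ENNReal.toReal_mono (measure_ne_top nu _)
    (measure_mono (fun w hw => lt_of_lt_of_le (hw : gpow l w < x) hxy))

lemma theta_zero (hl : 2 ≤ l) {u : ℝ} (hu : u ∈ Set.Icc (0:ℝ) 1) :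
    (Fcdf l (gpow l u))^l * l - (l:ℝ) * (Fcdf l (gpow l u) * gpow l u) = 0 := by
  rw [Fcdf_gpow hl hu]
  have h : u * gpow l u = u ^ l := by
    rw [gpow, ← pow_succ']
    congr 1
    omega
  rw [h]
  ring

/-- inner integral : box probabilities -/
lemma inner_eval (t : ℝ) :
    ∫ s : Fin l → ℝ, (indi (∀ j : Fin l, gpow l (s j) < t) (l:ℝ)
      - ∑ j : Fin l, indi (gpow l (s j) < t) t) ∂(QQ l)
    = (Fcdf l t)^l * l - (l:ℝ) * (Fcdf l t * t) := by
  have hA : MeasurableSet {w : ℝ | gpow l w < t} := measurableSet_lt gpow_meas measurable_const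
  have hsAll : MeasurableSet {s : Fin l → ℝ | ∀ j : Fin l, gpow l (s j) < t} := by
    have : {s : Fin l → ℝ | ∀ j : Fin l, gpow l (s j) < t}
        = ⋂ j : Fin l, {s : Fin l → ℝ | gpow l (s j) < t} := by ext s; simp
    rw [this]
    exact MeasurableSet.iInter (fun j =>
      measurableSet_lt (gpow_meas.comp (measurable_pi_apply j)) measurable_const)
  have hint1 : Integrable (fun s : Fin l → ℝ =>
      indi (∀ j : Fin l, gpow l (s j) < t) (l:ℝ)) (QQ l) := integrable_indi _ _ hsAll _
  have hint2 : ∀ j : Fin l, Integrable (fun s : Fin l → ℝ =>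
      indi (gpow l (s j) < t) t) (QQ l) := fun j => integrable_indi _ _
    (measurableSet_lt (gpow_meas.comp (measurable_pi_apply j)) measurable_const) _
  rw [integral_sub hint1 (integrable_finset_sum _ (fun j _ => hint2 j))]
  have e1 : ∫ s, indi (∀ j : Fin l, gpow l (s j) < t) (l:ℝ) ∂(QQ l) = (Fcdf l t)^l * l := by
    have hc : ∀ s : Fin l → ℝ, indi (∀ j : Fin l, gpow l (s j) < t) (l:ℝ)
        = indi (∀ j : Fin l, s j ∈ {w : ℝ | gpow l w < t}) (l:ℝ) :=
      fun s => indi_congr Iff.rfl _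
    simp only [hc]
    rw [QQ_def, integral_box nu (fun _ : Fin l => {w : ℝ | gpow l w < t}) (fun _ => hA) (l:ℝ)]
    rw [Finset.prod_const, Finset.card_univ, Fintype.card_fin]
    rfl
  have e2 : ∫ s, (∑ j : Fin l, indi (gpow l (s j) < t) t) ∂(QQ l) = (l:ℝ) * (Fcdf l t * t) := by
    rw [integral_finset_sum _ (fun j _ => hint2 j)]
    have h : ∀ j : Fin l, ∫ s, indi (gpow l (s j) < t) t ∂(QQ l) = Fcdf l t * t := by
      intro j
      have hc : ∀ s : Fin l → ℝ, indi (gpow l (s j) < t) t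
          = indi (s j ∈ {w : ℝ | gpow l w < t}) t := fun s => indi_congr Iff.rfl _
      simp only [hc]
      rw [QQ_def, integral_cyl nu j {w : ℝ | gpow l w < t} hA t]
      rfl
    rw [Finset.sum_congr rfl (fun j _ => h j)]
    rw [Finset.sum_const, Finset.card_univ, Fintype.card_fin, nsmul_eq_mul]
  rw [e1, e2]

lemma keycore_meas (a : Fin l) : Measurable (fun z : (Fin l → ℝ) × (Fin l → ℝ) =>
    (indi (∀ j : Fin l, gpow l (z.2 j) < gpow l (z.1 a)) (l:ℝ)
      - ∑ j : Fin l, indi (gpow l (z.2 j) < gpow l (z.1 a)) (gpow l (z.1 a)))) := by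
  have hgz1 : Measurable fun z : (Fin l → ℝ) × (Fin l → ℝ) => gpow l (z.1 a) :=
    gpow_meas.comp ((measurable_pi_apply a).comp measurable_fst)
  have hsetj : ∀ j : Fin l,
      MeasurableSet {z : (Fin l → ℝ) × (Fin l → ℝ) | gpow l (z.2 j) < gpow l (z.1 a)} :=
    fun j => measurableSet_lt (gpow_meas.comp ((measurable_pi_apply j).comp measurable_snd)) hgz1
  have hsetAll : MeasurableSet {z : (Fin l → ℝ) × (Fin l → ℝ) |
      ∀ j : Fin l, gpow l (z.2 j) < gpow l (z.1 a)} := by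
    have : {z : (Fin l → ℝ) × (Fin l → ℝ) | ∀ j : Fin l, gpow l (z.2 j) < gpow l (z.1 a)}
        = ⋂ j : Fin l, {z : (Fin l → ℝ) × (Fin l → ℝ) | gpow l (z.2 j) < gpow l (z.1 a)} := by
      ext z; simp
    rw [this]; exact MeasurableSet.iInter hsetj
  apply Measurable.sub
  · exact measurable_indi hsetAll measurable_const
  · exact Finset.measurable_sum _ (fun j _ => measurable_indi (hsetj j) hgz1)

lemma welfcore_meas (a : Fin l) : Measurable (fun z : (Fin l → ℝ) × (Fin l → ℝ) =>
    indi (∀ j : Fin l, gpow l (z.2 j) < gpow l (z.1 a)) (l:ℝ)) := by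
  have hgz1 : Measurable fun z : (Fin l → ℝ) × (Fin l → ℝ) => gpow l (z.1 a) :=
    gpow_meas.comp ((measurable_pi_apply a).comp measurable_fst)
  have hsetAll : MeasurableSet {z : (Fin l → ℝ) × (Fin l → ℝ) |
      ∀ j : Fin l, gpow l (z.2 j) < gpow l (z.1 a)} := by
    have : {z : (Fin l → ℝ) × (Fin l → ℝ) | ∀ j : Fin l, gpow l (z.2 j) < gpow l (z.1 a)}
        = ⋂ j : Fin l, {z : (Fin l → ℝ) × (Fin l → ℝ) | gpow l (z.2 j) < gpow l (z.1 a)} := by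
      ext z; simp
    rw [this]
    exact MeasurableSet.iInter (fun j => measurableSet_lt
      (gpow_meas.comp ((measurable_pi_apply j).comp measurable_snd)) hgz1)
  exact measurable_indi hsetAll measurable_const

lemma integral_swap_eq (F : (Fin l → ℝ) × (Fin l → ℝ) → ℝ) (hF : Measurable F) :
    ∫ z, F (Prod.swap z) ∂((QQ l).prod (QQ l)) = ∫ z, F z ∂((QQ l).prod (QQ l)) := by
  have hF2 : AEStronglyMeasurable F (Measure.map Prod.swap ((QQ l).prod (QQ l))) := by
    rw [Measure.prod_swap]
    exact hF.aestronglyMeasurable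
  conv_rhs => rw [← Measure.prod_swap]
  rw [integral_map measurable_swap.aemeasurable hF2]

lemma key_core (hl : 2 ≤ l) (a : Fin l) :
    ∫ z : (Fin l → ℝ) × (Fin l → ℝ),
      (indi (∀ j : Fin l, gpow l (z.2 j) < gpow l (z.1 a)) (l:ℝ)
        - ∑ j : Fin l, indi (gpow l (z.2 j) < gpow l (z.1 a)) (gpow l (z.1 a)))
      ∂((QQ l).prod (QQ l)) = 0 := by
  have hgz1 : Measurable fun z : (Fin l → ℝ) × (Fin l → ℝ) => gpow l (z.1 a) :=
    gpow_meas.comp ((measurable_pi_apply a).comp measurable_fst)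
  have hgz2 : ∀ j : Fin l, Measurable fun z : (Fin l → ℝ) × (Fin l → ℝ) => gpow l (z.2 j) :=
    fun j => gpow_meas.comp ((measurable_pi_apply j).comp measurable_snd)
  have hsetj : ∀ j : Fin l,
      MeasurableSet {z : (Fin l → ℝ) × (Fin l → ℝ) | gpow l (z.2 j) < gpow l (z.1 a)} :=
    fun j => measurableSet_lt (hgz2 j) hgz1
  have hsetAll : MeasurableSet {z : (Fin l → ℝ) × (Fin l → ℝ) |
      ∀ j : Fin l, gpow l (z.2 j) < gpow l (z.1 a)} := by
    have : {z : (Fin l → ℝ) × (Fin l → ℝ) | ∀ j : Fin l, gpow l (z.2 j) < gpow l (z.1 a)}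
        = ⋂ j : Fin l, {z : (Fin l → ℝ) × (Fin l → ℝ) | gpow l (z.2 j) < gpow l (z.1 a)} := by
      ext z; simp
    rw [this]; exact MeasurableSet.iInter hsetj
  set f : (Fin l → ℝ) × (Fin l → ℝ) → ℝ := fun z =>
      (indi (∀ j : Fin l, gpow l (z.2 j) < gpow l (z.1 a)) (l:ℝ)
        - ∑ j : Fin l, indi (gpow l (z.2 j) < gpow l (z.1 a)) (gpow l (z.1 a)))
    with hfdef
  have hf : Measurable f := by
    apply Measurable.sub
    · exact measurable_indi hsetAll measurable_const
    · exact Finset.measurable_sum _ (fun j _ => measurable_indi (hsetj j) hgz1)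
  have haebound : ∀ᵐ z ∂((QQ l).prod (QQ l)), ‖f z‖ ≤ (l:ℝ) + l := by
    filter_upwards [ae_fst_prod (QQ_icc_ae (l := l))] with z h1
    have hg0 : 0 ≤ gpow l (z.1 a) := pow_nonneg (h1 a).1 _
    have hg1 : gpow l (z.1 a) ≤ 1 := pow_le_one₀ (h1 a).1 (h1 a).2
    rw [Real.norm_eq_abs]
    have hb1 : |indi (∀ j : Fin l, gpow l (z.2 j) < gpow l (z.1 a)) (l:ℝ)| ≤ l :=
      abs_indi_le (by rw [abs_of_nonneg (by positivity)])
    have hb2 : |∑ j : Fin l, indi (gpow l (z.2 j) < gpow l (z.1 a)) (gpow l (z.1 a))| ≤ l := by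
      calc |∑ j : Fin l, indi (gpow l (z.2 j) < gpow l (z.1 a)) (gpow l (z.1 a))|
          ≤ ∑ j : Fin l, |indi (gpow l (z.2 j) < gpow l (z.1 a)) (gpow l (z.1 a))| :=
            Finset.abs_sum_le_sum_abs _ _
        _ ≤ ∑ _j : Fin l, (1:ℝ) := Finset.sum_le_sum (fun j _ =>
            abs_indi_le (by rwa [abs_of_nonneg hg0]))
        _ = l := by simp
    calc |f z| ≤ |indi (∀ j : Fin l, gpow l (z.2 j) < gpow l (z.1 a)) (l:ℝ)|
          + |∑ j : Fin l, indi (gpow l (z.2 j) < gpow l (z.1 a)) (gpow l (z.1 a))| :=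
          abs_sub _ _
      _ ≤ (l:ℝ) + l := add_le_add hb1 hb2
  have hInt : Integrable f ((QQ l).prod (QQ l)) :=
    Integrable.mono' (integrable_const _) hf.aestronglyMeasurable haebound
  rw [integral_prod _ hInt]
  rw [integral_congr_ae (g := fun _ => (0:ℝ))]
  · exact integral_zero _ _
  · have hae : ∀ᵐ x ∂(QQ l), (x a) ∈ Set.Icc (0:ℝ) 1 := by
      filter_upwards [QQ_icc_ae (l := l)] with x hx using hx a
    filter_upwards [hae] with x hx
    have : (fun s => f (x, s)) = fun s : Fin l → ℝ =>
        (indi (∀ j : Fin l, gpow l (s j) < gpow l (x a)) (l:ℝ)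
          - ∑ j : Fin l, indi (gpow l (s j) < gpow l (x a)) (gpow l (x a))) := rfl
    rw [this, inner_eval (gpow l (x a)), theta_zero hl hx]

lemma key_zero (hl : 2 ≤ l) (i : NN l) :
    ∫ y, (indi (∀ j : Fin l, gpow l (y (oppo i j)) < gpow l (y i)) (l:ℝ)
      - ∑ j : Fin l, indi (gpow l (y (oppo i j)) < gpow l (y i)) (gpow l (y i)))
      ∂(P0 l) = 0 := by
  rw [integral_P0_split]
  cases i with
  | inl a => exact key_core hl a
  | inr c =>
      exact (integral_swap_eq _ (keycore_meas c)).trans (key_core hl c)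

lemma key_welf_core (hl : 2 ≤ l) (a : Fin l) :
    ∫ z : (Fin l → ℝ) × (Fin l → ℝ),
      indi (∀ j : Fin l, gpow l (z.2 j) < gpow l (z.1 a)) (l:ℝ)
      ∂((QQ l).prod (QQ l)) ≤ 1 := by
  have hgz1 : Measurable fun z : (Fin l → ℝ) × (Fin l → ℝ) => gpow l (z.1 a) :=
    gpow_meas.comp ((measurable_pi_apply a).comp measurable_fst)
  have hsetAll : MeasurableSet {z : (Fin l → ℝ) × (Fin l → ℝ) |
      ∀ j : Fin l, gpow l (z.2 j) < gpow l (z.1 a)} := by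
    have : {z : (Fin l → ℝ) × (Fin l → ℝ) | ∀ j : Fin l, gpow l (z.2 j) < gpow l (z.1 a)}
        = ⋂ j : Fin l, {z : (Fin l → ℝ) × (Fin l → ℝ) | gpow l (z.2 j) < gpow l (z.1 a)} := by
      ext z; simp
    rw [this]
    exact MeasurableSet.iInter (fun j => measurableSet_lt
      (gpow_meas.comp ((measurable_pi_apply j).comp measurable_snd)) hgz1)
  have hInt : Integrable (fun z : (Fin l → ℝ) × (Fin l → ℝ) =>
      indi (∀ j : Fin l, gpow l (z.2 j) < gpow l (z.1 a)) (l:ℝ)) ((QQ l).prod (QQ l)) :=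
    integrable_indi _ _ hsetAll _
  rw [integral_prod _ hInt]
  -- inner integral is a box probability
  have hinner : ∀ x : Fin l → ℝ, (∫ s, indi (∀ j : Fin l, gpow l (s j) < gpow l (x a)) (l:ℝ)
      ∂(QQ l)) = (Fcdf l (gpow l (x a)))^l * l := by
    intro x
    have hA : MeasurableSet {w : ℝ | gpow l w < gpow l (x a)} :=
      measurableSet_lt gpow_meas measurable_const
    have hc : ∀ s : Fin l → ℝ, indi (∀ j : Fin l, gpow l (s j) < gpow l (x a)) (l:ℝ)
        = indi (∀ j : Fin l, s j ∈ {w : ℝ | gpow l w < gpow l (x a)}) (l:ℝ) :=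
      fun s => indi_congr Iff.rfl _
    simp only [hc]
    rw [QQ_def, integral_box nu (fun _ : Fin l => {w : ℝ | gpow l w < gpow l (x a)})
      (fun _ => hA) (l:ℝ)]
    rw [Finset.prod_const, Finset.card_univ, Fintype.card_fin]
    rfl
  simp only [hinner]
  -- reduce to a one dimensional integral
  have hmeas : Measurable fun u : ℝ => (Fcdf l (gpow l u))^l * l :=
    (((Fcdf_mono (l := l)).measurable.comp gpow_meas).pow_const l).mul_const _
  rw [show (fun x : Fin l → ℝ => (Fcdf l (gpow l (x a)))^l * (l:ℝ))
      = (fun x : Fin l → ℝ => (fun u => (Fcdf l (gpow l u))^l * (l:ℝ)) (x a)) from rfl]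
  rw [QQ_def, integral_eval_pi nu a hmeas.aestronglyMeasurable]
  -- now over nu
  have hcong : ∫ u, (Fcdf l (gpow l u))^l * (l:ℝ) ∂nu = ∫ u in Set.Icc (0:ℝ) 1, u^l * l := by
    rw [nu]
    apply setIntegral_congr_fun measurableSet_Icc
    intro u hu
    show Fcdf l (gpow l u) ^ l * (l:ℝ) = u ^ l * (l:ℝ)
    rw [Fcdf_gpow hl hu]
  rw [hcong]
  have : ∫ u in Set.Icc (0:ℝ) 1, u^l * (l:ℝ) = (∫ u in Set.Icc (0:ℝ) 1, u^l) * l :=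
    integral_mul_const _ _
  rw [this]
  have hpow : ∫ u in Set.Icc (0:ℝ) 1, u^l = 1/(l+1) := by
    rw [MeasureTheory.integral_Icc_eq_integral_Ioc,
      ← intervalIntegral.integral_of_le (zero_le_one (α := ℝ)), integral_pow]
    simp
  rw [hpow]
  rw [div_mul_eq_mul_div, one_mul, div_le_one (by positivity)]
  linarith

lemma key_welf (hl : 2 ≤ l) (i : NN l) :
    ∫ y, indi (∀ j : Fin l, gpow l (y (oppo i j)) < gpow l (y i)) (l:ℝ) ∂(P0 l) ≤ 1 := by
  rw [integral_P0_split]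
  cases i with
  | inl a => exact key_welf_core hl a
  | inr c =>
      have h := integral_swap_eq (l := l) _ (welfcore_meas c)
      calc ∫ z : (Fin l → ℝ) × (Fin l → ℝ),
            indi (∀ j : Fin l, gpow l (z.1 j) < gpow l (z.2 c)) (l:ℝ) ∂((QQ l).prod (QQ l))
          = ∫ z : (Fin l → ℝ) × (Fin l → ℝ),
            indi (∀ j : Fin l, gpow l (z.2 j) < gpow l (z.1 c)) (l:ℝ) ∂((QQ l).prod (QQ l)) :=
            integral_swap_eq _ (welfcore_meas c)
        _ ≤ 1 := key_welf_core hl c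

/-- deviation bound integral -/
lemma key_dev (hl : 2 ≤ l) (i : NN l) (x : Fin l → ℝ) (hx : ∀ j, 0 ≤ x j) :
    ∫ y, (indi (∀ j : Fin l, gpow l (y (oppo i j)) ≤ x j) (l:ℝ)
      - ∑ j : Fin l, indi (gpow l (y (oppo i j)) < x j) (x j)) ∂(P0 l) ≤ 0 := by
  have hAle : ∀ j : Fin l, MeasurableSet {w : ℝ | gpow l w ≤ x j} :=
    fun j => measurableSet_le gpow_meas measurable_const
  have hAlt : ∀ j : Fin l, MeasurableSet {w : ℝ | gpow l w < x j} :=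
    fun j => measurableSet_lt gpow_meas measurable_const
  have hsetAll : MeasurableSet {y : NN l → ℝ | ∀ j : Fin l, gpow l (y (oppo i j)) ≤ x j} := by
    have : {y : NN l → ℝ | ∀ j : Fin l, gpow l (y (oppo i j)) ≤ x j}
        = ⋂ j : Fin l, {y : NN l → ℝ | gpow l (y (oppo i j)) ≤ x j} := by ext y; simp
    rw [this]
    exact MeasurableSet.iInter (fun j => measurableSet_le
      (gpow_meas.comp (measurable_pi_apply _)) measurable_const)
  have hint1 : Integrable (fun y : NN l → ℝ =>
      indi (∀ j : Fin l, gpow l (y (oppo i j)) ≤ x j) (l:ℝ)) (P0 l) :=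
    integrable_indi _ _ hsetAll _
  have hint2 : ∀ j : Fin l, Integrable (fun y : NN l → ℝ =>
      indi (gpow l (y (oppo i j)) < x j) (x j)) (P0 l) := fun j => integrable_indi _ _
    (measurableSet_lt (gpow_meas.comp (measurable_pi_apply _)) measurable_const) _
  rw [integral_sub hint1 (integrable_finset_sum _ (fun j _ => hint2 j))]
  -- first term
  have e1 : ∫ y, indi (∀ j : Fin l, gpow l (y (oppo i j)) ≤ x j) (l:ℝ) ∂(P0 l)
      = (∏ j : Fin l, Fcdf' l (x j)) * l := by
    cases i with
    | inl a =>
        have hc : ∀ y : NN l → ℝ, indi (∀ j : Fin l, gpow l (y (oppo (Sum.inl a) j)) ≤ x j) (l:ℝ)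
            = indi (∀ k : NN l, y k ∈ Sum.elim (fun _ : Fin l => (Set.univ : Set ℝ))
                (fun j => {w : ℝ | gpow l w ≤ x j}) k) (l:ℝ) := by
          intro y
          apply indi_congr
          constructor
          · rintro h (a' | j)
            · simp
            · exact h j
          · intro h j
            exact h (Sum.inr j)
        simp only [hc]
        rw [P0_def, integral_box nu _ (fun k => by
          cases k with
          | inl a' => exact MeasurableSet.univ
          | inr j => exact hAle j) (l:ℝ)]
        congr 1
        rw [Fintype.prod_sum_type]
        simp [Fcdf']
    | inr c =>
        have hc : ∀ y : NN l → ℝ, indi (∀ j : Fin l, gpow l (y (oppo (Sum.inr c) j)) ≤ x j) (l:ℝ)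
            = indi (∀ k : NN l, y k ∈ Sum.elim (fun j => {w : ℝ | gpow l w ≤ x j})
                (fun _ : Fin l => (Set.univ : Set ℝ)) k) (l:ℝ) := by
          intro y
          apply indi_congr
          constructor
          · rintro h (j | c')
            · exact h j
            · simp
          · intro h j
            exact h (Sum.inl j)
        simp only [hc]
        rw [P0_def, integral_box nu _ (fun k => by
          cases k with
          | inl j => exact hAle j
          | inr c' => exact MeasurableSet.univ) (l:ℝ)]
        congr 1
        rw [Fintype.prod_sum_type]
        simp [Fcdf']
  -- second terms
  have e2 : ∀ j : Fin l, ∫ y, indi (gpow l (y (oppo i j)) < x j) (x j) ∂(P0 l)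
      = Fcdf l (x j) * x j := by
    intro j
    have hc : ∀ y : NN l → ℝ, indi (gpow l (y (oppo i j)) < x j) (x j)
        = indi (y (oppo i j) ∈ {w : ℝ | gpow l w < x j}) (x j) := fun y => indi_congr Iff.rfl _
    simp only [hc]
    rw [P0_def, integral_cyl nu (oppo i j) {w : ℝ | gpow l w < x j} (hAlt j) (x j)]
    rfl
  rw [e1, integral_finset_sum _ (fun j _ => hint2 j)]
  rw [Finset.sum_congr rfl (fun j _ => e2 j)]
  have := dev_ineq hl x hx
  have hcomm : ∑ j : Fin l, Fcdf l (x j) * x j = ∑ j : Fin l, x j * Fcdf l (x j) :=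
    Finset.sum_congr rfl (fun j _ => mul_comm _ _)
  rw [hcomm]
  linarith [dev_ineq hl x hx]

end PartB4

section PartB5
variable {l : ℕ}

lemma sigmaEq_nonneg (i : NN l) : sigmaEq l i {b : MM l → ℝ | ∀ q, 0 ≤ b q} = 1 := by
  rw [sigmaEq, Measure.map_apply (phi_meas i)]
  · have hsub : Set.Icc (0:ℝ) 1 ⊆ phi l i ⁻¹' {b : MM l → ℝ | ∀ q, 0 ≤ b q} := by
      intro u hu q
      simp only [phi]
      split
      · exact pow_nonneg hu.1 _
      · exact le_refl 0
    refine le_antisymm prob_le_one ?_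
    calc (1:ENNReal) = nu (Set.Icc 0 1) := by rw [nu_apply]; simp [Real.volume_Icc]
      _ ≤ nu (phi l i ⁻¹' {b : MM l → ℝ | ∀ q, 0 ≤ b q}) := measure_mono hsub
  · have : {b : MM l → ℝ | ∀ q, 0 ≤ b q} = ⋂ q, {b : MM l → ℝ | 0 ≤ b q} := by ext b; simp
    rw [this]
    exact MeasurableSet.iInter (fun q => measurableSet_le measurable_const
      (measurable_pi_apply q))

/-- the deviation bid map -/
noncomputable def Psi (l : ℕ) (i₀ : NN l) (b' : MM l → ℝ) : (NN l → ℝ) → (NN l → MM l → ℝ) :=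
  fun y k => Function.update (fun k' => phi l k') i₀ (fun _ => b') k (y k)

lemma Psi_meas (i₀ : NN l) (b' : MM l → ℝ) : Measurable (Psi l i₀ b') := by
  apply measurable_pi_lambda
  intro k
  rcases eq_or_ne k i₀ with rfl | hk
  · simp only [Psi, Function.update_self]
    exact measurable_const
  · simp only [Psi, Function.update_of_ne hk]
    exact (phi_meas k).comp (measurable_pi_apply k)

lemma Psi_apply_self (i₀ : NN l) (b' : MM l → ℝ) (y : NN l → ℝ) : Psi l i₀ b' y i₀ = b' := by
  simp [Psi]

lemma Psi_apply_ne (i₀ : NN l) (b' : MM l → ℝ) (y : NN l → ℝ) {k : NN l} (hk : k ≠ i₀) :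
    Psi l i₀ b' y k = phi l k (y k) := by
  simp [Psi, Function.update_of_ne hk]

lemma pi_update (i₀ : NN l) (b' : MM l → ℝ) :
    Measure.pi (Function.update (sigmaEq l) i₀ (Measure.dirac b'))
      = (P0 l).map (Psi l i₀ b') := by
  have hfam : Function.update (sigmaEq l) i₀ (Measure.dirac b')
      = fun k => nu.map (Function.update (fun k' => phi l k') i₀ (fun _ => b') k) := by
    funext k
    rcases eq_or_ne k i₀ with rfl | hk
    · rw [Function.update_self, Function.update_self, Measure.map_const, measure_univ, one_smul]
    · rw [Function.update_of_ne hk, Function.update_of_ne hk]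
      rfl
  rw [hfam]
  exact pi_map nu _ (fun k => by
    rcases eq_or_ne k i₀ with rfl | hk
    · rw [Function.update_self]; exact measurable_const
    · rw [Function.update_of_ne hk]; exact phi_meas k)

/-- the good event for the deviation analysis -/
def Gdev (l : ℕ) (i₀ : NN l) (b' : MM l → ℝ) : Set (NN l → MM l → ℝ) :=
  {b | b i₀ = b' ∧ ∀ k, k ≠ i₀ → ((∀ q, q ∉ own k → b k q = 0) ∧ (∀ q, 0 ≤ b k q))}

lemma Gdev_meas (i₀ : NN l) (b' : MM l → ℝ) : MeasurableSet (Gdev l i₀ b') := by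
  have h1 : MeasurableSet {b : NN l → MM l → ℝ | b i₀ = b'} := by
    have : {b : NN l → MM l → ℝ | b i₀ = b'} = ⋂ q, {b : NN l → MM l → ℝ | b i₀ q = b' q} := by
      ext b; simp [funext_iff]
    rw [this]
    exact MeasurableSet.iInter (fun q =>
      measurableSet_eq_fun (meas_eval2 i₀ q) measurable_const)
  have h2 : MeasurableSet {b : NN l → MM l → ℝ |
      ∀ k, k ≠ i₀ → ((∀ q, q ∉ own k → b k q = 0) ∧ (∀ q, 0 ≤ b k q))} := by
    have : {b : NN l → MM l → ℝ | ∀ k, k ≠ i₀ → ((∀ q, q ∉ own k → b k q = 0) ∧ (∀ q, 0 ≤ b k q))}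
        = ⋂ k, {b : NN l → MM l → ℝ | k ≠ i₀ → ((∀ q, q ∉ own k → b k q = 0) ∧ (∀ q, 0 ≤ b k q))}
        := by ext b; simp
    rw [this]
    refine MeasurableSet.iInter (fun k => ?_)
    by_cases hk : k = i₀
    · have : {b : NN l → MM l → ℝ | k ≠ i₀ → ((∀ q, q ∉ own k → b k q = 0) ∧ (∀ q, 0 ≤ b k q))}
          = Set.univ := by ext b; simp [hk]
      rw [this]; exact MeasurableSet.univ
    · have : {b : NN l → MM l → ℝ | k ≠ i₀ → ((∀ q, q ∉ own k → b k q = 0) ∧ (∀ q, 0 ≤ b k q))}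
          = {b : NN l → MM l → ℝ | ∀ q, q ∉ own k → b k q = 0}
            ∩ {b : NN l → MM l → ℝ | ∀ q, 0 ≤ b k q} := by
        ext b; simp [hk]
      rw [this]
      apply MeasurableSet.inter
      · have h3 : {b : NN l → MM l → ℝ | ∀ q, q ∉ own k → b k q = 0}
            = ⋂ q, {b : NN l → MM l → ℝ | q ∉ own k → b k q = 0} := by ext b; simp
        rw [h3]
        refine MeasurableSet.iInter (fun q => ?_)
        by_cases hq : q ∈ own k
        · have : {b : NN l → MM l → ℝ | q ∉ own k → b k q = 0} = Set.univ := by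
            ext b; simp [hq]
          rw [this]; exact MeasurableSet.univ
        · have : {b : NN l → MM l → ℝ | q ∉ own k → b k q = 0}
              = {b : NN l → MM l → ℝ | b k q = 0} := by ext b; simp [hq]
          rw [this]
          exact measurableSet_eq_fun (meas_eval2 k q) measurable_const
      · have h4 : {b : NN l → MM l → ℝ | ∀ q, 0 ≤ b k q}
            = ⋂ q, {b : NN l → MM l → ℝ | 0 ≤ b k q} := by ext b; simp
        rw [h4]
        exact MeasurableSet.iInter (fun q =>
          measurableSet_le measurable_const (meas_eval2 k q))
  exact h1.inter h2

lemma Psi_Gdev_null (i₀ : NN l) (b' : MM l → ℝ) :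
    P0 l ((Psi l i₀ b') ⁻¹' (Gdev l i₀ b')ᶜ) = 0 := by
  apply measure_mono_null (t := {y : NN l → ℝ | ¬ ∀ k, y k ∈ Set.Icc (0:ℝ) 1})
  · intro y hy
    simp only [Set.mem_preimage, Set.mem_compl_iff] at hy
    simp only [Set.mem_setOf_eq]
    intro hIcc
    apply hy
    refine ⟨Psi_apply_self i₀ b' y, fun k hk => ?_⟩
    rw [Psi_apply_ne i₀ b' y hk]
    constructor
    · intro q hq
      simp [phi, hq]
    · intro q
      simp only [phi]
      split
      · exact pow_nonneg (hIcc k).1 _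
      · exact le_refl 0
  · exact ae_iff.mp P0_icc_ae

/-- explicit upper bound for the deviator's utility -/
noncomputable def bndf (l : ℕ) (i₀ : NN l) (b' : MM l → ℝ) (b : NN l → MM l → ℝ) : ℝ :=
  indi (∀ j : Fin l, b (oppo i₀ j) (itm i₀ j) ≤ b' (itm i₀ j)) (l:ℝ)
    - ∑ j : Fin l, indi (b (oppo i₀ j) (itm i₀ j) < b' (itm i₀ j)) (b' (itm i₀ j))

lemma bndf_meas (i₀ : NN l) (b' : MM l → ℝ) : Measurable (bndf l i₀ b') := by
  apply Measurable.sub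
  · apply measurable_indi _ measurable_const
    have : {b : NN l → MM l → ℝ | ∀ j : Fin l, b (oppo i₀ j) (itm i₀ j) ≤ b' (itm i₀ j)}
        = ⋂ j : Fin l, {b : NN l → MM l → ℝ | b (oppo i₀ j) (itm i₀ j) ≤ b' (itm i₀ j)} := by
      ext b; simp
    rw [this]
    exact MeasurableSet.iInter (fun j =>
      measurableSet_le (meas_eval2 (oppo i₀ j) (itm i₀ j)) measurable_const)
  · exact Finset.measurable_sum _ (fun j _ => measurable_indi
      (measurableSet_lt (meas_eval2 (oppo i₀ j) (itm i₀ j)) measurable_const) measurable_const)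

lemma bndf_abs_le (i₀ : NN l) (b' : MM l → ℝ) (hb' : ∀ q, 0 ≤ b' q) (b : NN l → MM l → ℝ) :
    ‖bndf l i₀ b' b‖ ≤ (l:ℝ) + ∑ j : Fin l, b' (itm i₀ j) := by
  rw [Real.norm_eq_abs, bndf]
  calc |indi (∀ j : Fin l, b (oppo i₀ j) (itm i₀ j) ≤ b' (itm i₀ j)) (l:ℝ)
        - ∑ j : Fin l, indi (b (oppo i₀ j) (itm i₀ j) < b' (itm i₀ j)) (b' (itm i₀ j))|
      ≤ |indi (∀ j : Fin l, b (oppo i₀ j) (itm i₀ j) ≤ b' (itm i₀ j)) (l:ℝ)|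
        + |∑ j : Fin l, indi (b (oppo i₀ j) (itm i₀ j) < b' (itm i₀ j)) (b' (itm i₀ j))| :=
        abs_sub _ _
    _ ≤ (l:ℝ) + ∑ j : Fin l, b' (itm i₀ j) := by
        apply add_le_add
        · exact abs_indi_le (by rw [abs_of_nonneg (by positivity)])
        · calc |∑ j : Fin l, indi (b (oppo i₀ j) (itm i₀ j) < b' (itm i₀ j)) (b' (itm i₀ j))|
              ≤ ∑ j : Fin l, |indi (b (oppo i₀ j) (itm i₀ j) < b' (itm i₀ j)) (b' (itm i₀ j))| :=
                Finset.abs_sum_le_sum_abs _ _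
            _ ≤ ∑ j : Fin l, b' (itm i₀ j) := Finset.sum_le_sum (fun j _ =>
                abs_indi_le (by rw [abs_of_nonneg (hb' _)]))

lemma bndf_Psi (i₀ : NN l) (b' : MM l → ℝ) (y : NN l → ℝ) :
    bndf l i₀ b' (Psi l i₀ b' y)
      = indi (∀ j : Fin l, gpow l (y (oppo i₀ j)) ≤ b' (itm i₀ j)) (l:ℝ)
        - ∑ j : Fin l, indi (gpow l (y (oppo i₀ j)) < b' (itm i₀ j)) (b' (itm i₀ j)) := by
  have h : ∀ j : Fin l, Psi l i₀ b' y (oppo i₀ j) (itm i₀ j) = gpow l (y (oppo i₀ j)) := by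
    intro j
    rw [Psi_apply_ne i₀ b' y (oppo_ne i₀ j)]
    simp [phi, itm_mem_own_oppo i₀ j]
  simp only [bndf, h]

lemma dev_win (T : TieRule (NN l) (MM l)) {i₀ : NN l} {b' : MM l → ℝ}
    {b : NN l → MM l → ℝ} (hb : b ∈ Gdev l i₀ b') (j : Fin l)
    (hlt : b (oppo i₀ j) (itm i₀ j) < b' (itm i₀ j)) : itm i₀ j ∈ T.alloc b i₀ := by
  obtain ⟨w, hw, _⟩ := T.partition b (itm i₀ j)
  have hbi : b i₀ (itm i₀ j) = b' (itm i₀ j) := by rw [hb.1]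
  have hopp_nonneg : 0 ≤ b (oppo i₀ j) (itm i₀ j) :=
    (hb.2 (oppo i₀ j) (oppo_ne i₀ j)).2 (itm i₀ j)
  have hiw : w = i₀ := by
    by_contra hne
    have hle := T.highest b w (itm i₀ j) hw i₀
    rw [hbi] at hle
    have hwpos : 0 < b w (itm i₀ j) := lt_of_le_of_lt hopp_nonneg (lt_of_lt_of_le hlt hle)
    have hwown : itm i₀ j ∈ own w := by
      by_contra hno
      rw [(hb.2 w hne).1 _ hno] at hwpos
      exact lt_irrefl 0 hwpos
    rcases own_itm_cases hwown with h | h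
    · exact hne h
    · rw [h] at hle
      linarith
  rw [hiw] at hw; exact hw

section WithV2
variable {v : NN l → Finset (MM l) → ℝ} (hv : ∀ i, v i = singleMinded (own i) (l : ℝ))
include hv

lemma utility_le_bndf (T : TieRule (NN l) (MM l)) (i₀ : NN l) (b' : MM l → ℝ)
    (hb' : ∀ q, 0 ≤ b' q) {b : NN l → MM l → ℝ} (hb : b ∈ Gdev l i₀ b') :
    utility v T b i₀ ≤ bndf l i₀ b' b := by
  rw [utility, bndf]
  have hval : v i₀ (T.alloc b i₀)
      ≤ indi (∀ j : Fin l, b (oppo i₀ j) (itm i₀ j) ≤ b' (itm i₀ j)) (l:ℝ) := by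
    rw [v_apply hv]
    by_cases hsub : own i₀ ⊆ T.alloc b i₀
    · rw [if_pos hsub]
      have hcond : ∀ j : Fin l, b (oppo i₀ j) (itm i₀ j) ≤ b' (itm i₀ j) := by
        intro j
        have hmem : itm i₀ j ∈ T.alloc b i₀ := hsub (itm_mem_own i₀ j)
        have h := T.highest b i₀ (itm i₀ j) hmem (oppo i₀ j)
        rwa [hb.1] at h
      rw [indi_of_true hcond]
    · rw [if_neg hsub]
      exact indi_nonneg (by positivity)
  have hpay : ∑ j : Fin l, indi (b (oppo i₀ j) (itm i₀ j) < b' (itm i₀ j)) (b' (itm i₀ j))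
      ≤ ∑ q ∈ T.alloc b i₀, b i₀ q := by
    classical
    calc ∑ j : Fin l, indi (b (oppo i₀ j) (itm i₀ j) < b' (itm i₀ j)) (b' (itm i₀ j))
        ≤ ∑ j : Fin l, indi (itm i₀ j ∈ T.alloc b i₀) (b' (itm i₀ j)) :=
          Finset.sum_le_sum (fun j _ => indi_mono (dev_win T hb j) (hb' _))
      _ = ∑ q ∈ own i₀, indi (q ∈ T.alloc b i₀) (b' q) :=
          (sum_own i₀ (fun q => indi (q ∈ T.alloc b i₀) (b' q))).symm
      _ = ∑ q ∈ (own i₀).filter (fun q => q ∈ T.alloc b i₀), b' q := by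
          rw [Finset.sum_filter]
          apply Finset.sum_congr rfl
          intro q _
          by_cases h : q ∈ T.alloc b i₀
          · rw [if_pos h, indi_of_true h]
          · rw [if_neg h, indi_of_false h]
      _ ≤ ∑ q ∈ T.alloc b i₀, b' q := Finset.sum_le_sum_of_subset_of_nonneg
          (fun q hq => (Finset.mem_filter.1 hq).2) (fun q _ _ => hb' q)
      _ = ∑ q ∈ T.alloc b i₀, b i₀ q := Finset.sum_congr rfl (fun q _ => by rw [hb.1])
  exact sub_le_sub hval hpay

end WithV2

lemma ustar_Phi (y : NN l → ℝ) (i : NN l) :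
    ustar l (Phi l y) i
      = indi (∀ j : Fin l, gpow l (y (oppo i j)) < gpow l (y i)) (l:ℝ)
        - ∑ j : Fin l, indi (gpow l (y (oppo i j)) < gpow l (y i)) (gpow l (y i)) := by
  have h1 : ∀ j : Fin l, Phi l y (oppo i j) (itm i j) = gpow l (y (oppo i j)) := by
    intro j; simp [Phi, phi, itm_mem_own_oppo i j]
  have h2 : ∀ j : Fin l, Phi l y i (itm i j) = gpow l (y i) := by
    intro j; simp [Phi, phi, itm_mem_own i j]
  simp only [ustar, h1, h2]

lemma Wstar_Phi (y : NN l → ℝ) :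
    Wstar l (Phi l y)
      = ∑ i : NN l, indi (∀ j : Fin l, gpow l (y (oppo i j)) < gpow l (y i)) (l:ℝ) := by
  have h1 : ∀ (i : NN l) (j : Fin l), Phi l y (oppo i j) (itm i j) = gpow l (y (oppo i j)) := by
    intro i j; simp [Phi, phi, itm_mem_own_oppo i j]
  have h2 : ∀ (i : NN l) (j : Fin l), Phi l y i (itm i j) = gpow l (y i) := by
    intro i j; simp [Phi, phi, itm_mem_own i j]
  simp only [Wstar, h1, h2]

end PartB5

section PartB6
variable {l : ℕ}

lemma measSet_win_y (i : NN l) : MeasurableSet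
    {y : NN l → ℝ | ∀ j : Fin l, gpow l (y (oppo i j)) < gpow l (y i)} := by
  have : {y : NN l → ℝ | ∀ j : Fin l, gpow l (y (oppo i j)) < gpow l (y i)}
      = ⋂ j : Fin l, {y : NN l → ℝ | gpow l (y (oppo i j)) < gpow l (y i)} := by ext y; simp
  rw [this]
  exact MeasurableSet.iInter (fun j => measurableSet_lt
    (gpow_meas.comp (measurable_pi_apply _)) (gpow_meas.comp (measurable_pi_apply _)))

section WithV3
variable {v : NN l → Finset (MM l) → ℝ} (hv : ∀ i, v i = singleMinded (own i) (l : ℝ))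
include hv

lemma mixed_rhs (hl : 2 ≤ l) (T : TieRule (NN l) (MM l)) (i : NN l) :
    ∫ b, utility v T b i ∂((P0 l).map (Phi l)) = 0 := by
  have hae : (fun b => utility v T b i) =ᵐ[(P0 l).map (Phi l)] (fun b => ustar l b i) := by
    rw [Filter.EventuallyEq, ae_iff]
    apply measure_mono_null (t := (Gset l)ᶜ)
    · intro b hb
      simp only [Set.mem_setOf_eq] at hb
      simp only [Set.mem_compl_iff]
      intro hG
      exact hb (utility_on_G hv T hG i)
    · rw [Measure.map_apply Phi_meas Gset_meas.compl]
      exact Phi_preimage_Gset_compl_null hl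
  rw [integral_congr_ae hae,
    integral_map Phi_meas.aemeasurable (ustar_meas i).aestronglyMeasurable]
  simp only [ustar_Phi]
  exact key_zero hl i

lemma mixed_lhs (hl : 2 ≤ l) (T : TieRule (NN l) (MM l)) (i : NN l) (b' : MM l → ℝ)
    (hb' : ∀ q, 0 ≤ b' q) :
    ∫ b, utility v T b i ∂((P0 l).map (Psi l i b')) ≤ 0 := by
  by_cases hI : Integrable (fun b => utility v T b i) ((P0 l).map (Psi l i b'))
  · haveI : IsProbabilityMeasure ((P0 l).map (Psi l i b')) :=
      Measure.isProbabilityMeasure_map (Psi_meas i b').aemeasurable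
    have hbnd_int : Integrable (bndf l i b') ((P0 l).map (Psi l i b')) :=
      Integrable.mono' (integrable_const _) (bndf_meas i b').aestronglyMeasurable
        (Filter.Eventually.of_forall (bndf_abs_le i b' hb'))
    have hle : (fun b => utility v T b i) ≤ᵐ[(P0 l).map (Psi l i b')] bndf l i b' := by
      rw [Filter.EventuallyLE, ae_iff]
      apply measure_mono_null (t := (Gdev l i b')ᶜ)
      · intro b hb
        simp only [Set.mem_setOf_eq, not_le] at hb
        simp only [Set.mem_compl_iff]
        intro hG
        exact absurd (utility_le_bndf hv T i b' hb' hG) (not_le.2 hb)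
      · rw [Measure.map_apply (Psi_meas i b') (Gdev_meas i b').compl]
        exact Psi_Gdev_null i b'
    calc ∫ b, utility v T b i ∂((P0 l).map (Psi l i b'))
        ≤ ∫ b, bndf l i b' b ∂((P0 l).map (Psi l i b')) :=
          integral_mono_ae hI hbnd_int hle
      _ = ∫ y, bndf l i b' (Psi l i b' y) ∂(P0 l) :=
          integral_map (Psi_meas i b').aemeasurable (bndf_meas i b').aestronglyMeasurable
      _ ≤ 0 := by
          simp only [bndf_Psi]
          exact key_dev hl i (fun j => b' (itm i j)) (fun j => hb' _)
  · rw [integral_undef hI]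

lemma mixed_welfare (hl : 2 ≤ l) (T : TieRule (NN l) (MM l)) :
    ∫ b, welfare v (T.alloc b) ∂((P0 l).map (Phi l)) ≤ 2 * l := by
  have hae : (fun b => welfare v (T.alloc b)) =ᵐ[(P0 l).map (Phi l)] Wstar l := by
    rw [Filter.EventuallyEq, ae_iff]
    apply measure_mono_null (t := (Gset l)ᶜ)
    · intro b hb
      simp only [Set.mem_setOf_eq] at hb
      simp only [Set.mem_compl_iff]
      intro hG
      exact hb (welfare_on_G hv T hG)
    · rw [Measure.map_apply Phi_meas Gset_meas.compl]
      exact Phi_preimage_Gset_compl_null hl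
  rw [integral_congr_ae hae,
    integral_map Phi_meas.aemeasurable Wstar_meas.aestronglyMeasurable]
  simp only [Wstar_Phi]
  rw [integral_finset_sum _ (fun i _ => integrable_indi _ _ (measSet_win_y i) _)]
  calc ∑ i : NN l, ∫ y, indi (∀ j : Fin l, gpow l (y (oppo i j)) < gpow l (y i)) (l:ℝ) ∂(P0 l)
      ≤ ∑ _i : NN l, (1:ℝ) := Finset.sum_le_sum (fun i _ => key_welf hl i)
    _ = 2 * l := by
        rw [Finset.sum_const, Finset.card_univ]
        simp only [Fintype.card_sum, Fintype.card_fin, nsmul_eq_mul, mul_one]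
        push_cast
        ring

end WithV3
end PartB6

end RCG

/-- the rows/columns game on `m = l²` items with `l` row bidders and `l`
column bidders, each single-minded with value `l` for its row (resp. column). It has, for a
suitable tie-breaking rule, a pure Nash equilibrium of social welfare `l²`, which is the
optimal social welfare (price of stability `1`), and for every tie-breaking rule it has a
mixed Nash equilibrium of expected social welfare at most `2l`; hence its price of anarchy
is at least `l/2 = √m/2`. -/
theorem rows_columns_game {l : ℕ} (hl : 2 ≤ l)
    (v : (Fin l ⊕ Fin l) → Finset (Fin l × Fin l) → ℝ)
    (hrow : ∀ i : Fin l, v (Sum.inl i) =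
      singleMinded (Finset.univ.filter fun q : Fin l × Fin l => q.1 = i) (l : ℝ))
    (hcol : ∀ j : Fin l, v (Sum.inr j) =
      singleMinded (Finset.univ.filter fun q : Fin l × Fin l => q.2 = j) (l : ℝ)) :
    (∃ (T : TieRule (Fin l ⊕ Fin l) (Fin l × Fin l))
        (b : (Fin l ⊕ Fin l) → Fin l × Fin l → ℝ),
        (∀ i q, 0 ≤ b i q) ∧ PureNash v T b ∧
        welfare v (T.alloc b) = (l : ℝ) ^ 2 ∧
        IsGreatest {w | ∃ S : (Fin l ⊕ Fin l) → Finset (Fin l × Fin l),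
          IsAllocation S ∧ welfare v S = w} ((l : ℝ) ^ 2)) ∧
    (∀ T : TieRule (Fin l ⊕ Fin l) (Fin l × Fin l),
        ∃ σ : (Fin l ⊕ Fin l) → Measure (Fin l × Fin l → ℝ),
          (∀ i, IsProbabilityMeasure (σ i)) ∧ NonnegMixed σ ∧
          MixedNash v T σ ∧ expectedWelfare v T σ ≤ 2 * l) := by
  haveI : NeZero l := ⟨by omega⟩
  have hv : ∀ i : RCG.NN l, v i = singleMinded (RCG.own i) (l : ℝ) := by
    intro i
    cases i with
    | inl a => exact hrow a
    | inr b => exact hcol b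
  constructor
  · refine ⟨RCG.TA l, RCG.beq, fun i q => RCG.beq_nonneg i q, RCG.pureNash_beq hv,
      RCG.welfare_TA_beq hv, ?_, ?_⟩
    · exact ⟨_, RCG.isAllocation_opt, RCG.welfare_opt hv⟩
    · rintro w ⟨S, hS, rfl⟩
      exact RCG.welfare_le hv S hS
  · intro T
    refine ⟨RCG.sigmaEq l, fun i => inferInstance, RCG.sigmaEq_nonneg, ?_, ?_⟩
    · intro i b' hb'
      have hrhs : expectedUtility v T (RCG.sigmaEq l) i = 0 := by
        simp only [expectedUtility]
        rw [RCG.pi_sigmaEq]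
        exact RCG.mixed_rhs hv hl T i
      have hlhs : expectedUtility v T
          (Function.update (RCG.sigmaEq l) i (Measure.dirac b')) i ≤ 0 := by
        simp only [expectedUtility]
        rw [RCG.pi_update i b']
        exact RCG.mixed_lhs hv hl T i b' hb'
      rw [hrhs]; exact hlhs
    · simp only [expectedWelfare]
      rw [RCG.pi_sigmaEq]
      exact RCG.mixed_welfare hv hl T
end
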